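/- arXiv:2104.10537 — 10 statements merged into one kernel-verified Lean document; each statement's English description precedes it below -/
import Mathlib

section
/- Fix x ≥ 0 and 0 < t₁ < t₂. If τ₁ is any minimizer of τ ↦ G(τ,x,t₁) over [0,∞) and τ₂ is any minimizer of τ ↦ G(τ,x,t₂) over [0,∞), then τ₁ ≤ τ₂. In particular, τ_*(x,t) and τ^*(x,t) are monotonically increasing in t for fixed x, and τ^*(x,t₁) ≤ τ_*(x,t₂). -/
open MeasureTheory Set Filter

noncomputable def Fpot (ρ0 u0 : ℝ → ℝ) (y x t : ℝ) : ℝ :=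
  ∫ η in (0:ℝ)..y, (t * u0 η + η - x) * ρ0 η

noncomputable def Gpot (ρb ub : ℝ → ℝ) (τ x t : ℝ) : ℝ :=
  ∫ η in (0:ℝ)..τ, (x - ub η * (t - η)) * (ρb η * ub η)

/-- `a` minimizes `f` over `[0, ∞)`. -/
def MinimizesOn (f : ℝ → ℝ) (a : ℝ) : Prop :=
  0 ≤ a ∧ ∀ b, 0 ≤ b → f a ≤ f b

/-- `a` is the smallest minimizer of `f` over `[0, ∞)`. -/
def SmallestMinimizer (f : ℝ → ℝ) (a : ℝ) : Prop :=
  MinimizesOn f a ∧ ∀ b, MinimizesOn f b → a ≤ b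

/-- `a` is the largest minimizer of `f` over `[0, ∞)`. -/
def LargestMinimizer (f : ℝ → ℝ) (a : ℝ) : Prop :=
  MinimizesOn f a ∧ ∀ b, MinimizesOn f b → b ≤ a

/-- `v` is the (attained) minimum value of `f` over `[0, ∞)`. -/
def IsMinValue (f : ℝ → ℝ) (v : ℝ) : Prop :=
  (∃ a, 0 ≤ a ∧ f a = v) ∧ ∀ b, 0 ≤ b → v ≤ f b

lemma intInt_of_bdd {f : ℝ → ℝ} (hf : Measurable f) {τ M : ℝ} (hτ : 0 ≤ τ)
    (hb : ∀ η ∈ Set.Icc (0:ℝ) τ, |f η| ≤ M) :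
    IntervalIntegrable f MeasureTheory.volume 0 τ := by
  rw [intervalIntegrable_iff]
  refine MeasureTheory.Integrable.mono' (g := fun _ => M)
    ((MeasureTheory.integrableOn_const_iff (C := M)).mpr (Or.inr ?_))
    hf.aestronglyMeasurable.restrict ?_
  · rw [Set.uIoc_of_le hτ]; exact measure_Ioc_lt_top
  · filter_upwards [MeasureTheory.ae_restrict_mem measurableSet_uIoc] with η hη
    rw [Set.uIoc_of_le hτ] at hη
    exact hb η ⟨hη.1.le, hη.2⟩

theorem stmt0
    (ρ0 u0 ρb ub : ℝ → ℝ)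
    (hρ0meas : Measurable ρ0) (hu0meas : Measurable u0)
    (hρbmeas : Measurable ρb) (hubmeas : Measurable ub)
    (hρ0pos : ∀ η, 0 ≤ η → 0 < ρ0 η)
    (hρbpos : ∀ η, 0 ≤ η → 0 < ρb η)
    (hubpos : ∀ η, 0 ≤ η → 0 < ub η)
    (hρ0loc : ∀ K : ℝ, ∃ M : ℝ, ∀ η ∈ Set.Icc (0:ℝ) K, ρ0 η ≤ M)
    (hρbloc : ∀ K : ℝ, ∃ M : ℝ, ∀ η ∈ Set.Icc (0:ℝ) K, ρb η ≤ M)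
    (hu0bdd : ∃ M : ℝ, ∀ η, 0 ≤ η → |u0 η| ≤ M)
    (hubbdd : ∃ M : ℝ, ∀ η, 0 ≤ η → |ub η| ≤ M)
    (x t₁ t₂ τ₁ τ₂ : ℝ)
    (hx : 0 ≤ x) (ht₁ : 0 < t₁) (ht : t₁ < t₂)
    (hτ₁ : MinimizesOn (fun τ => Gpot ρb ub τ x t₁) τ₁)
    (hτ₂ : MinimizesOn (fun τ => Gpot ρb ub τ x t₂) τ₂) :
    τ₁ ≤ τ₂ := by
  by_contra hlt
  push_neg at hlt
  obtain ⟨hτ₁0, hτ₁min⟩ := hτ₁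
  obtain ⟨hτ₂0, hτ₂min⟩ := hτ₂
  obtain ⟨Mu, hMu⟩ := hubbdd
  obtain ⟨Mρ, hMρ⟩ := hρbloc τ₁
  have hMu0 : 0 ≤ Mu := le_trans (abs_nonneg _) (hMu 0 le_rfl)
  have hMρ0 : 0 ≤ Mρ := le_trans (hρbpos 0 le_rfl).le (hMρ 0 ⟨le_rfl, hτ₁0⟩)
  -- bound on |ρb η * ub η| on Icc 0 τ₁
  have hprod : ∀ η ∈ Set.Icc (0:ℝ) τ₁, |ρb η * ub η| ≤ Mρ * Mu := by
    intro η hη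
    rw [abs_mul]
    have h1 : |ρb η| ≤ Mρ := by
      rw [abs_of_pos (hρbpos η hη.1)]; exact hMρ η hη
    exact mul_le_mul h1 (hMu η hη.1) (abs_nonneg _) hMρ0
  -- integrability of the G integrand
  have hint : ∀ t τ, 0 ≤ τ → τ ≤ τ₁ →
      IntervalIntegrable (fun η => (x - ub η * (t - η)) * (ρb η * ub η))
        MeasureTheory.volume 0 τ := by
    intro t τ hτ0 hττ₁
    refine intInt_of_bdd ?_ (M := (|x| + Mu * (|t| + τ₁)) * (Mρ * Mu)) hτ0 ?_
    · exact ((measurable_const.sub (hubmeas.mul (measurable_const.sub measurable_id)))).mul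
        (hρbmeas.mul hubmeas)
    · intro η hη
      have hη' : η ∈ Set.Icc (0:ℝ) τ₁ := ⟨hη.1, hη.2.trans hττ₁⟩
      rw [abs_mul]
      refine mul_le_mul ?_ (hprod η hη') (abs_nonneg _) ?_
      · calc |x - ub η * (t - η)| ≤ |x| + |ub η * (t - η)| := abs_sub _ _
          _ ≤ |x| + Mu * (|t| + τ₁) := by
              rw [abs_mul]
              have h2 : |t - η| ≤ |t| + τ₁ := by
                calc |t - η| ≤ |t| + |η| := abs_sub _ _
                  _ ≤ |t| + τ₁ := by
                      rw [abs_of_nonneg hη'.1]; linarith [hη'.2]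
              have := mul_le_mul (hMu η hη'.1) h2 (abs_nonneg _) hMu0
              linarith
      · positivity
  -- integrability of the H integrand
  have hH : ∀ τ, 0 ≤ τ → τ ≤ τ₁ →
      IntervalIntegrable (fun η => ub η * (ρb η * ub η)) MeasureTheory.volume 0 τ := by
    intro τ hτ0 hττ₁
    refine intInt_of_bdd (hubmeas.mul (hρbmeas.mul hubmeas)) (M := Mu * (Mρ * Mu)) hτ0 ?_
    intro η hη
    have hη' : η ∈ Set.Icc (0:ℝ) τ₁ := ⟨hη.1, hη.2.trans hττ₁⟩
    rw [Pi.mul_apply, Pi.mul_apply, abs_mul]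
    exact mul_le_mul (hMu η hη'.1) (hprod η hη') (abs_nonneg _) hMu0
  -- key identity
  have hkey : ∀ τ, 0 ≤ τ → τ ≤ τ₁ →
      Gpot ρb ub τ x t₁ - Gpot ρb ub τ x t₂
        = (t₂ - t₁) * ∫ η in (0:ℝ)..τ, ub η * (ρb η * ub η) := by
    intro τ hτ0 hττ₁
    unfold Gpot
    rw [← intervalIntegral.integral_sub (hint t₁ τ hτ0 hττ₁) (hint t₂ τ hτ0 hττ₁),
      ← intervalIntegral.integral_const_mul]
    apply intervalIntegral.integral_congr
    intro η _
    ring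
  set H₁ := ∫ η in (0:ℝ)..τ₁, ub η * (ρb η * ub η) with hH₁def
  set H₂ := ∫ η in (0:ℝ)..τ₂, ub η * (ρb η * ub η) with hH₂def
  have k₁ := hkey τ₁ hτ₁0 le_rfl
  have k₂ := hkey τ₂ hτ₂0 hlt.le
  have A := hτ₁min τ₂ hτ₂0
  have B := hτ₂min τ₁ hτ₁0
  simp only at A B
  -- H₁ - H₂ = ∫ τ₂..τ₁ > 0
  have hsub : H₁ - H₂ = ∫ η in τ₂..τ₁, ub η * (ρb η * ub η) :=
    intervalIntegral.integral_interval_sub_left (hH τ₁ hτ₁0 le_rfl)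
      (hH τ₂ hτ₂0 hlt.le)
  have hpos : 0 < ∫ η in τ₂..τ₁, ub η * (ρb η * ub η) := by
    refine intervalIntegral.intervalIntegral_pos_of_pos_on
      ((hH τ₁ hτ₁0 le_rfl).mono_set ?_) ?_ hlt
    · rw [Set.uIcc_of_le hlt.le, Set.uIcc_of_le hτ₁0]
      exact Set.Icc_subset_Icc hτ₂0 le_rfl
    · intro η hη
      have hη0 : 0 ≤ η := hτ₂0.trans hη.1.le
      exact mul_pos (hubpos η hη0) (mul_pos (hρbpos η hη0) (hubpos η hη0))
  have hc : 0 < (t₂ - t₁) * (H₁ - H₂) := by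
    rw [hsub]; exact mul_pos (by linarith) hpos
  nlinarith [hc]
end

section
/- Fix t > 0 and 0 ≤ x₁ < x₂. If τ₁ is any minimizer of τ ↦ G(τ,x₁,t) over [0,∞) and τ₂ is any minimizer of τ ↦ G(τ,x₂,t) over [0,∞), then τ₂ ≤ τ₁. In particular, τ_*(x,t) and τ^*(x,t) are monotonically decreasing in x for fixed t, and τ^*(x₂,t) ≤ τ_*(x₁,t). -/
open MeasureTheory Set Filter

lemma intInt_of_bdd_s1 {f : ℝ → ℝ} (hf : Measurable f) {a b C : ℝ}
    (h : ∀ η ∈ Set.uIcc a b, |f η| ≤ C) : IntervalIntegrable f volume a b := by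
  rw [intervalIntegrable_iff]
  refine MeasureTheory.Measure.integrableOn_of_bounded (M := C) ?_ hf.aestronglyMeasurable ?_
  · exact (measure_Ioc_lt_top).ne
  · filter_upwards [ae_restrict_mem measurableSet_uIoc] with η hη
    simpa [Real.norm_eq_abs] using h η (Set.uIoc_subset_uIcc hη)


theorem stmt1
    (ρ0 u0 ρb ub : ℝ → ℝ)
    (hρ0meas : Measurable ρ0) (hu0meas : Measurable u0)
    (hρbmeas : Measurable ρb) (hubmeas : Measurable ub)
    (hρ0pos : ∀ η, 0 ≤ η → 0 < ρ0 η)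
    (hρbpos : ∀ η, 0 ≤ η → 0 < ρb η)
    (hubpos : ∀ η, 0 ≤ η → 0 < ub η)
    (hρ0loc : ∀ K : ℝ, ∃ M : ℝ, ∀ η ∈ Set.Icc (0:ℝ) K, ρ0 η ≤ M)
    (hρbloc : ∀ K : ℝ, ∃ M : ℝ, ∀ η ∈ Set.Icc (0:ℝ) K, ρb η ≤ M)
    (hu0bdd : ∃ M : ℝ, ∀ η, 0 ≤ η → |u0 η| ≤ M)
    (hubbdd : ∃ M : ℝ, ∀ η, 0 ≤ η → |ub η| ≤ M)
    (t x₁ x₂ τ₁ τ₂ : ℝ)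
    (ht : 0 < t) (hx₁ : 0 ≤ x₁) (hx : x₁ < x₂)
    (hτ₁ : MinimizesOn (fun τ => Gpot ρb ub τ x₁ t) τ₁)
    (hτ₂ : MinimizesOn (fun τ => Gpot ρb ub τ x₂ t) τ₂) :
    τ₂ ≤ τ₁ := by
  obtain ⟨Mu, hMu⟩ := hubbdd
  have hMu0 : 0 ≤ Mu := le_trans (abs_nonneg _) (hMu 0 le_rfl)
  set g : ℝ → ℝ := fun η => ρb η * ub η with hg
  have hgmeas : Measurable g := hρbmeas.mul hubmeas
  -- integrability of g and of the Gpot integrands on intervals within [0,∞)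
  have key : ∀ a b : ℝ, 0 ≤ a → 0 ≤ b → IntervalIntegrable g volume a b ∧
      (∀ x : ℝ, IntervalIntegrable (fun η => (x - ub η * (t - η)) * g η) volume a b) := by
    intro a b ha hb
    obtain ⟨M, hM⟩ := hρbloc (max a b)
    have hIcc : Set.uIcc a b ⊆ Set.Icc 0 (max a b) := by
      exact Set.uIcc_subset_Icc ⟨ha, le_max_left a b⟩ ⟨hb, le_max_right a b⟩
    have hM0 : 0 ≤ M := le_of_lt (lt_of_lt_of_le (hρbpos 0 le_rfl)
      (hM 0 ⟨le_rfl, le_max_of_le_left ha⟩))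
    have hgbd : ∀ η ∈ Set.uIcc a b, |g η| ≤ M * Mu := by
      intro η hη
      have hη' := hIcc hη
      have h1 : |ρb η| ≤ M := by
        rw [abs_of_pos (hρbpos η hη'.1)]; exact hM η hη'
      calc |g η| = |ρb η| * |ub η| := abs_mul _ _
        _ ≤ M * Mu := mul_le_mul h1 (hMu η hη'.1) (abs_nonneg _) hM0
    constructor
    · exact intInt_of_bdd_s1 hgmeas hgbd
    · intro x
      have hm : Measurable (fun η => (x - ub η * (t - η)) * g η) :=
        ((measurable_const.sub (hubmeas.mul (measurable_const.sub measurable_id)))).mul hgmeas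
      refine intInt_of_bdd_s1 hm (C := (|x| + Mu * (|t| + max a b)) * (M * Mu)) ?_
      intro η hη
      have hη' := hIcc hη
      have h1 : |ρb η| ≤ M := by
        rw [abs_of_pos (hρbpos η hη'.1)]; exact hM η hη'
      have hgb : |g η| ≤ M * Mu := by
        rw [hg]; simp only [abs_mul]
        exact mul_le_mul h1 (hMu η hη'.1) (abs_nonneg _) hM0
      have htb : |t - η| ≤ |t| + max a b := by
        calc |t - η| ≤ |t| + |η| := abs_sub _ _
          _ ≤ |t| + max a b := by
            have : |η| ≤ max a b := by rw [abs_of_nonneg hη'.1]; exact hη'.2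
            linarith
      have hfac : |x - ub η * (t - η)| ≤ |x| + Mu * (|t| + max a b) := by
        calc |x - ub η * (t - η)| ≤ |x| + |ub η * (t - η)| := abs_sub _ _
          _ = |x| + |ub η| * |t - η| := by rw [abs_mul]
          _ ≤ |x| + Mu * (|t| + max a b) := by
            have := mul_le_mul (hMu η hη'.1) htb (abs_nonneg _) hMu0
            linarith
      calc |(x - ub η * (t - η)) * g η| = |x - ub η * (t - η)| * |g η| := abs_mul _ _
        _ ≤ (|x| + Mu * (|t| + max a b)) * (M * Mu) :=
          mul_le_mul hfac hgb (abs_nonneg _) (by positivity)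
  -- decomposition: Gpot τ x t = Gpot τ 0-like; difference formula
  have hdiff : ∀ τ : ℝ, 0 ≤ τ →
      Gpot ρb ub τ x₂ t - Gpot ρb ub τ x₁ t = (x₂ - x₁) * ∫ η in (0:ℝ)..τ, g η := by
    intro τ hτ
    obtain ⟨hgint, hint⟩ := key 0 τ le_rfl hτ
    rw [Gpot, Gpot, ← intervalIntegral.integral_sub (hint x₂) (hint x₁),
      ← intervalIntegral.integral_const_mul]
    congr 1; funext η; ring
  -- the two minimizer inequalities
  have h1 : Gpot ρb ub τ₁ x₁ t ≤ Gpot ρb ub τ₂ x₁ t := hτ₁.2 τ₂ hτ₂.1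
  have h2 : Gpot ρb ub τ₂ x₂ t ≤ Gpot ρb ub τ₁ x₂ t := hτ₂.2 τ₁ hτ₁.1
  have hH : (∫ η in (0:ℝ)..τ₂, g η) ≤ ∫ η in (0:ℝ)..τ₁, g η := by
    have e1 := hdiff τ₁ hτ₁.1
    have e2 := hdiff τ₂ hτ₂.1
    have : (x₂ - x₁) * (∫ η in (0:ℝ)..τ₂, g η) ≤ (x₂ - x₁) * ∫ η in (0:ℝ)..τ₁, g η := by
      rw [← e1, ← e2]; linarith
    exact le_of_mul_le_mul_left this (by linarith)
  by_contra hlt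
  push_neg at hlt
  have hpos : 0 < ∫ η in τ₁..τ₂, g η := by
    refine intervalIntegral.intervalIntegral_pos_of_pos_on
      ((key τ₁ τ₂ hτ₁.1 hτ₂.1).1) ?_ hlt
    intro η hη
    exact mul_pos (hρbpos η (le_of_lt (lt_of_le_of_lt hτ₁.1 hη.1)))
      (hubpos η (le_of_lt (lt_of_le_of_lt hτ₁.1 hη.1)))
  have hadd : (∫ η in (0:ℝ)..τ₁, g η) + ∫ η in τ₁..τ₂, g η = ∫ η in (0:ℝ)..τ₂, g η :=
    intervalIntegral.integral_add_adjacent_intervals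
      ((key 0 τ₁ le_rfl hτ₁.1).1) ((key τ₁ τ₂ hτ₁.1 hτ₂.1).1)
  linarith
end

section
/- Fix t > 0 and 0 ≤ x₁ < x₂. If y₁ is any minimizer of y ↦ F(y,x₁,t) over [0,∞) and y₂ is any minimizer of y ↦ F(y,x₂,t) over [0,∞), then y₁ ≤ y₂. In particular, y_*(x,t) and y^*(x,t) are monotonically increasing in x for fixed t, and y^*(x₁,t) ≤ y_*(x₂,t). -/
open MeasureTheory Set Filter

/-- A measurable function bounded on `uIoc a b` is interval integrable. -/
lemma intervalIntegrable_of_bdd {f : ℝ → ℝ} (hf : Measurable f) {a b C : ℝ}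
    (hC : ∀ η ∈ Set.uIoc a b, |f η| ≤ C) :
    IntervalIntegrable f MeasureTheory.volume a b := by
  rw [intervalIntegrable_iff]
  apply MeasureTheory.Integrable.mono' (g := fun _ => C)
    (MeasureTheory.integrableOn_const measure_Ioc_lt_top.ne)
    hf.aestronglyMeasurable.restrict
  refine (MeasureTheory.ae_restrict_iff' measurableSet_uIoc).2 ?_
  filter_upwards with η hη using by simpa [Real.norm_eq_abs] using hC η hη

theorem stmt2
    (ρ0 u0 ρb ub : ℝ → ℝ)
    (hρ0meas : Measurable ρ0) (hu0meas : Measurable u0)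
    (hρbmeas : Measurable ρb) (hubmeas : Measurable ub)
    (hρ0pos : ∀ η, 0 ≤ η → 0 < ρ0 η)
    (hρbpos : ∀ η, 0 ≤ η → 0 < ρb η)
    (hubpos : ∀ η, 0 ≤ η → 0 < ub η)
    (hρ0loc : ∀ K : ℝ, ∃ M : ℝ, ∀ η ∈ Set.Icc (0:ℝ) K, ρ0 η ≤ M)
    (hρbloc : ∀ K : ℝ, ∃ M : ℝ, ∀ η ∈ Set.Icc (0:ℝ) K, ρb η ≤ M)
    (hu0bdd : ∃ M : ℝ, ∀ η, 0 ≤ η → |u0 η| ≤ M)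
    (hubbdd : ∃ M : ℝ, ∀ η, 0 ≤ η → |ub η| ≤ M)
    (t x₁ x₂ y₁ y₂ : ℝ)
    (ht : 0 < t) (hx₁ : 0 ≤ x₁) (hx : x₁ < x₂)
    (hy₁ : MinimizesOn (fun y => Fpot ρ0 u0 y x₁ t) y₁)
    (hy₂ : MinimizesOn (fun y => Fpot ρ0 u0 y x₂ t) y₂) :
    y₁ ≤ y₂ := by
  by_contra hcon
  push_neg at hcon
  obtain ⟨hy₁0, hy₁min⟩ := hy₁
  obtain ⟨hy₂0, hy₂min⟩ := hy₂
  obtain ⟨Mu, hMu⟩ := hu0bdd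
  -- integrability helpers on [0, y] for 0 ≤ y
  have hρ0int : ∀ a b : ℝ, 0 ≤ a → 0 ≤ b →
      IntervalIntegrable ρ0 MeasureTheory.volume a b := by
    intro a b ha hb
    obtain ⟨M, hM⟩ := hρ0loc (max a b)
    refine intervalIntegrable_of_bdd hρ0meas (C := max M 0) ?_
    intro η hη
    rw [Set.uIoc, Set.mem_Ioc] at hη
    have h0 : 0 ≤ η := le_trans (le_min ha hb) hη.1.le
    have := hM η ⟨h0, hη.2⟩
    rw [abs_of_nonneg (hρ0pos η h0).le]
    exact le_max_of_le_left this
  have hFint : ∀ x y : ℝ, 0 ≤ y →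
      IntervalIntegrable (fun η => (t * u0 η + η - x) * ρ0 η)
        MeasureTheory.volume 0 y := by
    intro x y hy
    obtain ⟨M, hM⟩ := hρ0loc y
    have hmeas : Measurable fun η => (t * u0 η + η - x) * ρ0 η := by
      exact (((measurable_const.mul hu0meas).add measurable_id).sub
        measurable_const).mul hρ0meas
    refine intervalIntegrable_of_bdd hmeas
      (C := (|t| * Mu + y + |x|) * max M 0) ?_
    intro η hη
    rw [Set.uIoc_of_le hy, Set.mem_Ioc] at hη
    have h0 : (0:ℝ) ≤ η := hη.1.le
    have hρM : ρ0 η ≤ max M 0 := le_max_of_le_left (hM η ⟨h0, hη.2⟩)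
    rw [abs_mul]
    apply mul_le_mul _ _ (abs_nonneg _) _
    · calc |t * u0 η + η - x| ≤ |t * u0 η| + |η| + |x| := by
            calc |t * u0 η + η - x| ≤ |t * u0 η + η| + |x| := abs_sub _ _
              _ ≤ |t * u0 η| + |η| + |x| := by
                  gcongr; exact abs_add_le _ _
        _ ≤ |t| * Mu + y + |x| := by
            rw [abs_mul, abs_of_nonneg h0]
            gcongr
            · exact hMu η h0
            · exact hη.2
    · rw [abs_of_nonneg (hρ0pos η h0).le]; exact hρM
    · have : 0 ≤ Mu := le_trans (abs_nonneg _) (hMu 0 le_rfl)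
      positivity
  -- key identity
  have hkey : ∀ y : ℝ, 0 ≤ y →
      Fpot ρ0 u0 y x₂ t - Fpot ρ0 u0 y x₁ t
        = (x₁ - x₂) * ∫ η in (0:ℝ)..y, ρ0 η := by
    intro y hy
    rw [Fpot, Fpot, ← intervalIntegral.integral_sub (hFint x₂ y hy) (hFint x₁ y hy),
      ← intervalIntegral.integral_const_mul]
    congr 1
    ext η
    ring
  -- combine minimality
  have h1 : Fpot ρ0 u0 y₁ x₁ t ≤ Fpot ρ0 u0 y₂ x₁ t := hy₁min y₂ hy₂0
  have h2 : Fpot ρ0 u0 y₂ x₂ t ≤ Fpot ρ0 u0 y₁ x₂ t := hy₂min y₁ hy₁0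
  have h3 : (x₁ - x₂) * ∫ η in (0:ℝ)..y₂, ρ0 η
      ≤ (x₁ - x₂) * ∫ η in (0:ℝ)..y₁, ρ0 η := by
    rw [← hkey y₁ hy₁0, ← hkey y₂ hy₂0]; linarith
  have h4 : (∫ η in (0:ℝ)..y₁, ρ0 η) ≤ ∫ η in (0:ℝ)..y₂, ρ0 η :=
    le_of_mul_le_mul_left (by linarith [h3]) (by linarith : (0:ℝ) < x₂ - x₁) |>.trans_eq rfl
  -- but the integral over (y₂, y₁] is positive
  have hadd : (∫ η in (0:ℝ)..y₂, ρ0 η) + (∫ η in y₂..y₁, ρ0 η)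
      = ∫ η in (0:ℝ)..y₁, ρ0 η :=
    intervalIntegral.integral_add_adjacent_intervals (hρ0int 0 y₂ le_rfl hy₂0)
      (hρ0int y₂ y₁ hy₂0 hy₁0)
  have hpos : 0 < ∫ η in y₂..y₁, ρ0 η := by
    apply intervalIntegral.intervalIntegral_pos_of_pos_on
      (hρ0int y₂ y₁ hy₂0 hy₁0) _ hcon
    intro η hη
    exact hρ0pos η (le_trans hy₂0 hη.1.le)
  linarith
end

section
/- Fix t > 0 and 0 ≤ x₁ < x₂. If G(x₁,t) = G(x₂,t), then G(x,t) = 0 for every x ∈ [x₁,x₂], and for every x ∈ (x₁,x₂] the point τ = 0 is the unique minimizer of τ ↦ G(τ,x,t) over [0,∞). -/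
open MeasureTheory Set Filter

lemma integ_of_bdd (f : ℝ → ℝ) (hf : Measurable f) (τ C : ℝ) (hτ : 0 ≤ τ)
    (hC : ∀ η ∈ Set.Icc (0:ℝ) τ, |f η| ≤ C) :
    IntervalIntegrable f volume 0 τ := by
  rw [intervalIntegrable_iff, Set.uIoc_of_le hτ]
  refine ⟨hf.aestronglyMeasurable.restrict, ?_⟩
  apply MeasureTheory.HasFiniteIntegral.restrict_of_bounded (C := C)
    (by simp)
  rw [MeasureTheory.ae_restrict_iff' measurableSet_Ioc]
  filter_upwards with η hη
  exact hC η ⟨le_of_lt hη.1, hη.2⟩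

theorem stmt3
    (ρ0 u0 ρb ub : ℝ → ℝ)
    (hρ0meas : Measurable ρ0) (hu0meas : Measurable u0)
    (hρbmeas : Measurable ρb) (hubmeas : Measurable ub)
    (hρ0pos : ∀ η, 0 ≤ η → 0 < ρ0 η)
    (hρbpos : ∀ η, 0 ≤ η → 0 < ρb η)
    (hubpos : ∀ η, 0 ≤ η → 0 < ub η)
    (hρ0loc : ∀ K : ℝ, ∃ M : ℝ, ∀ η ∈ Set.Icc (0:ℝ) K, ρ0 η ≤ M)
    (hρbloc : ∀ K : ℝ, ∃ M : ℝ, ∀ η ∈ Set.Icc (0:ℝ) K, ρb η ≤ M)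
    (hu0bdd : ∃ M : ℝ, ∀ η, 0 ≤ η → |u0 η| ≤ M)
    (hubbdd : ∃ M : ℝ, ∀ η, 0 ≤ η → |ub η| ≤ M)
    (Gm : ℝ → ℝ → ℝ)
    (hGm : ∀ x t, 0 ≤ x → 0 ≤ t → IsMinValue (fun τ => Gpot ρb ub τ x t) (Gm x t))
    (t x₁ x₂ : ℝ) (ht : 0 < t) (hx₁ : 0 ≤ x₁) (hx : x₁ < x₂)
    (heq : Gm x₁ t = Gm x₂ t) :
    (∀ x ∈ Set.Icc x₁ x₂, Gm x t = 0) ∧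
    (∀ x ∈ Set.Ioc x₁ x₂,
      MinimizesOn (fun τ => Gpot ρb ub τ x t) 0 ∧
      ∀ τ, MinimizesOn (fun τ => Gpot ρb ub τ x t) τ → τ = 0) := by
  obtain ⟨Mu, hMu⟩ := hubbdd
  have hMu0 : 0 ≤ Mu := le_trans (abs_nonneg _) (hMu 0 le_rfl)
  have hx₂ : 0 ≤ x₂ := le_trans hx₁ hx.le
  have hG0 : ∀ x, Gpot ρb ub 0 x t = 0 := by intro x; simp [Gpot]
  -- integrability of ρb * ub
  have hρu_int : ∀ τ, 0 ≤ τ → IntervalIntegrable (fun η => ρb η * ub η) volume 0 τ := by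
    intro τ hτ
    obtain ⟨Mρ, hMρ⟩ := hρbloc τ
    refine integ_of_bdd _ (hρbmeas.mul hubmeas) τ (Mρ * Mu) hτ ?_
    intro η hη
    have h1 : 0 < ρb η := hρbpos η hη.1
    have h2 : ρb η ≤ Mρ := hMρ η hη
    have h3 : |ub η| ≤ Mu := hMu η hη.1
    rw [Pi.mul_apply, abs_mul, abs_of_pos h1]
    exact mul_le_mul h2 h3 (abs_nonneg _) (le_trans h1.le h2)
  -- integrability of the full integrand
  have hint : ∀ x τ, 0 ≤ τ →
      IntervalIntegrable (fun η => (x - ub η * (t - η)) * (ρb η * ub η)) volume 0 τ := by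
    intro x τ hτ
    obtain ⟨Mρ, hMρ⟩ := hρbloc τ
    have hMρ0 : 0 ≤ Mρ := le_trans (hρbpos 0 le_rfl).le (hMρ 0 ⟨le_rfl, hτ⟩)
    refine integ_of_bdd _ (((measurable_const.sub (hubmeas.mul
      (measurable_const.sub measurable_id)))).mul (hρbmeas.mul hubmeas)) τ
      ((|x| + Mu * (|t| + τ)) * (Mρ * Mu)) hτ ?_
    intro η hη
    have h1 : 0 < ρb η := hρbpos η hη.1
    have h2 : ρb η ≤ Mρ := hMρ η hη
    have h3 : |ub η| ≤ Mu := hMu η hη.1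
    have h4 : |t - η| ≤ |t| + τ := by
      calc |t - η| ≤ |t| + |η| := abs_sub _ _
        _ ≤ |t| + τ := by rw [abs_of_nonneg hη.1]; linarith [hη.2]
    have h5 : |x - ub η * (t - η)| ≤ |x| + Mu * (|t| + τ) := by
      calc |x - ub η * (t - η)| ≤ |x| + |ub η * (t - η)| := abs_sub _ _
        _ = |x| + |ub η| * |t - η| := by rw [abs_mul]
        _ ≤ |x| + Mu * (|t| + τ) := by
            have := mul_le_mul h3 h4 (abs_nonneg _) hMu0
            linarith
    have h6 : |ρb η * ub η| ≤ Mρ * Mu := by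
      rw [abs_mul, abs_of_pos h1]
      exact mul_le_mul h2 h3 (abs_nonneg _) (le_trans h1.le h2)
    show |(x - ub η * (t - η)) * (ρb η * ub η)| ≤ _
    rw [abs_mul]
    exact mul_le_mul h5 h6 (abs_nonneg _) (by positivity)
  -- the difference formula
  have hdiff : ∀ x x' τ, 0 ≤ τ →
      Gpot ρb ub τ x t - Gpot ρb ub τ x' t = (x - x') * ∫ η in (0:ℝ)..τ, ρb η * ub η := by
    intro x x' τ hτ
    unfold Gpot
    rw [← intervalIntegral.integral_sub (hint x τ hτ) (hint x' τ hτ),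
      ← intervalIntegral.integral_const_mul]
    congr 1
    ext η
    ring
  have hipos : ∀ τ, 0 < τ → 0 < ∫ η in (0:ℝ)..τ, ρb η * ub η := by
    intro τ hτ
    exact intervalIntegral.intervalIntegral_pos_of_pos_on (hρu_int τ hτ.le)
      (fun η hη => mul_pos (hρbpos η hη.1.le) (hubpos η hη.1.le)) hτ
  have hinn : ∀ τ, 0 ≤ τ → 0 ≤ ∫ η in (0:ℝ)..τ, ρb η * ub η := by
    intro τ hτ
    exact intervalIntegral.integral_nonneg hτ
      (fun η hη => (mul_pos (hρbpos η hη.1) (hubpos η hη.1)).le)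
  have hmono : ∀ a b τ, a ≤ b → 0 ≤ τ → Gpot ρb ub τ a t ≤ Gpot ρb ub τ b t := by
    intro a b τ hab hτ
    have h := hdiff a b τ hτ
    have h2 : (a - b) * ∫ η in (0:ℝ)..τ, ρb η * ub η ≤ 0 :=
      mul_nonpos_of_nonpos_of_nonneg (sub_nonpos.2 hab) (hinn τ hτ)
    linarith
  have hGmmono : ∀ a b, 0 ≤ a → a ≤ b → Gm a t ≤ Gm b t := by
    intro a b ha hab
    obtain ⟨⟨τ, hτ0, hτeq⟩, -⟩ := hGm b t (ha.trans hab) ht.le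
    calc Gm a t ≤ Gpot ρb ub τ a t := (hGm a t ha ht.le).2 τ hτ0
      _ ≤ Gpot ρb ub τ b t := hmono a b τ hab hτ0
      _ = Gm b t := hτeq
  -- main claims on Ioc
  have hIoc : ∀ x ∈ Set.Ioc x₁ x₂, Gm x t = 0 ∧
      (∀ τ, MinimizesOn (fun τ => Gpot ρb ub τ x t) τ → τ = 0) := by
    intro x hxm
    have hx0 : 0 ≤ x := le_trans hx₁ hxm.1.le
    have hGmx_eq : Gm x t = Gm x₁ t := by
      have h1 := hGmmono x₁ x hx₁ hxm.1.le
      have h2 := hGmmono x x₂ hx0 hxm.2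
      linarith [heq]
    obtain ⟨⟨a, ha0, haeq⟩, hlb⟩ := hGm x t hx0 ht.le
    have hkey : ∀ τ, MinimizesOn (fun τ => Gpot ρb ub τ x t) τ → τ = 0 := by
      rintro τ ⟨hτ0, hminτ⟩
      have hval : Gpot ρb ub τ x t = Gm x t :=
        le_antisymm (haeq ▸ hminτ a ha0) (hlb τ hτ0)
      by_contra hne
      have hτpos : 0 < τ := lt_of_le_of_ne hτ0 (Ne.symm hne)
      have hI := hipos τ hτpos
      have hd := hdiff x x₁ τ hτ0
      have hxx₁ : 0 < x - x₁ := sub_pos.2 hxm.1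
      have h1 : Gpot ρb ub τ x₁ t < Gpot ρb ub τ x t := by nlinarith
      have h2 := (hGm x₁ t hx₁ ht.le).2 τ hτ0
      linarith [hGmx_eq, hval]
    have hamin : MinimizesOn (fun τ => Gpot ρb ub τ x t) a :=
      ⟨ha0, fun b hb => haeq ▸ hlb b hb⟩
    have ha0' : a = 0 := hkey a hamin
    have hGmx0 : Gm x t = 0 := by rw [← haeq, ha0']; exact hG0 x
    exact ⟨hGmx0, hkey⟩
  have hx₂Ioc : x₂ ∈ Set.Ioc x₁ x₂ := ⟨hx, le_rfl⟩
  have hGmzero : ∀ x ∈ Set.Icc x₁ x₂, Gm x t = 0 := by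
    intro x hxm
    rcases eq_or_lt_of_le hxm.1 with h | h
    · rw [← h, heq, (hIoc x₂ hx₂Ioc).1]
    · exact (hIoc x ⟨h, hxm.2⟩).1
  refine ⟨hGmzero, fun x hxm => ?_⟩
  have hx0 : 0 ≤ x := le_trans hx₁ hxm.1.le
  have hGmx0 : Gm x t = 0 := hGmzero x ⟨hxm.1.le, hxm.2⟩
  refine ⟨⟨le_rfl, fun b hb => ?_⟩, (hIoc x hxm).2⟩
  have := (hGm x t hx0 ht.le).2 b hb
  simpa [hG0 x, hGmx0] using (hGmx0 ▸ this)
end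

section
/- Fix x ≥ 0 and t > 0, and let ŷ be a minimizer of y ↦ F(y,x,t) over [0,∞). Then for any point (x′,t′) lying strictly between (ŷ,0) and (x,t) on the line segment joining them, one has F(y,x′,t′) > F(ŷ,x′,t′) for every y ≥ 0 with y ≠ ŷ; that is, ŷ is the unique minimizer of y ↦ F(y,x′,t′). -/
open MeasureTheory Set Filter

private lemma myII (f : ℝ → ℝ) (hf : Measurable f) (a b C : ℝ)
    (h : ∀ x ∈ Set.uIcc a b, |f x| ≤ C) :
    IntervalIntegrable f volume a b := by
  apply IntervalIntegrable.mono_fun (intervalIntegrable_const (c := C))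
  · exact hf.aestronglyMeasurable.restrict
  · refine (ae_restrict_iff' measurableSet_uIoc).2 (ae_of_all _ fun x hx => ?_)
    simpa [Real.norm_eq_abs, abs_of_nonneg
      (le_trans (abs_nonneg _) (h x (uIoc_subset_uIcc hx)))] using
      (h x (uIoc_subset_uIcc hx)).trans (le_abs_self C)

private lemma II0 (f : ℝ → ℝ) (hf : Measurable f)
    (hb : ∀ K : ℝ, ∃ C, ∀ η ∈ Set.Icc (0:ℝ) K, |f η| ≤ C)
    {a b : ℝ} (ha : 0 ≤ a) (hb' : 0 ≤ b) :
    IntervalIntegrable f volume a b := by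
  obtain ⟨C, hC⟩ := hb (max a b)
  apply myII f hf a b C
  intro x hx
  rw [Set.uIcc] at hx
  exact hC x ⟨le_trans (le_min ha hb') hx.1, hx.2⟩

theorem stmt4
    (ρ0 u0 ρb ub : ℝ → ℝ)
    (hρ0meas : Measurable ρ0) (hu0meas : Measurable u0)
    (hρbmeas : Measurable ρb) (hubmeas : Measurable ub)
    (hρ0pos : ∀ η, 0 ≤ η → 0 < ρ0 η)
    (hρbpos : ∀ η, 0 ≤ η → 0 < ρb η)
    (hubpos : ∀ η, 0 ≤ η → 0 < ub η)
    (hρ0loc : ∀ K : ℝ, ∃ M : ℝ, ∀ η ∈ Set.Icc (0:ℝ) K, ρ0 η ≤ M)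
    (hρbloc : ∀ K : ℝ, ∃ M : ℝ, ∀ η ∈ Set.Icc (0:ℝ) K, ρb η ≤ M)
    (hu0bdd : ∃ M : ℝ, ∀ η, 0 ≤ η → |u0 η| ≤ M)
    (hubbdd : ∃ M : ℝ, ∀ η, 0 ≤ η → |ub η| ≤ M)
    (x t yh : ℝ) (hx : 0 ≤ x) (ht : 0 < t)
    (hyh : MinimizesOn (fun y => Fpot ρ0 u0 y x t) yh)
    (θ x' t' : ℝ) (hθ : θ ∈ Set.Ioo (0:ℝ) 1)
    (hx' : x' = (1 - θ) * yh + θ * x) (ht' : t' = θ * t) :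
    ∀ y, 0 ≤ y → y ≠ yh → Fpot ρ0 u0 yh x' t' < Fpot ρ0 u0 y x' t' := by
  intro y hy hne
  obtain ⟨hyh0, hmin⟩ := hyh
  obtain ⟨θ0, θ1⟩ := hθ
  obtain ⟨M0, hM0⟩ := hu0bdd
  -- measurability of the integrands
  have hgmeas : Measurable (fun η => (t * u0 η + η - x) * ρ0 η) := by
    exact (((measurable_const.mul hu0meas).add measurable_id).sub measurable_const).mul hρ0meas
  have hhmeas : Measurable (fun η => (η - yh) * ρ0 η) := by
    exact (measurable_id.sub measurable_const).mul hρ0meas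
  -- local boundedness of the integrands
  have hgb : ∀ K : ℝ, ∃ C, ∀ η ∈ Set.Icc (0:ℝ) K, |(t * u0 η + η - x) * ρ0 η| ≤ C := by
    intro K
    obtain ⟨M, hM⟩ := hρ0loc K
    refine ⟨(|t| * M0 + |K| + |x|) * M, fun η hη => ?_⟩
    have hρ := hρ0pos η hη.1
    have hMη := hM η hη
    have hu := hM0 η hη.1
    rw [abs_mul, abs_of_pos hρ]
    have h2 : |t * u0 η + η - x| ≤ |t| * M0 + |K| + |x| := by
      have h3 := abs_add_le (t * u0 η + η) (-x)
      have h4 := abs_add_le (t * u0 η) η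
      have h5 : |t * u0 η| = |t| * |u0 η| := abs_mul t (u0 η)
      have h6 : |η| ≤ |K| := by
        rw [abs_of_nonneg hη.1]; exact le_trans hη.2 (le_abs_self K)
      have h7 : |t| * |u0 η| ≤ |t| * M0 := mul_le_mul_of_nonneg_left hu (abs_nonneg t)
      have h8 : |(-x)| = |x| := abs_neg x
      have h9 : t * u0 η + η - x = t * u0 η + η + (-x) := by ring
      rw [h9]
      nlinarith
    exact mul_le_mul h2 hMη hρ.le (le_trans (abs_nonneg _) h2)
  have hhb : ∀ K : ℝ, ∃ C, ∀ η ∈ Set.Icc (0:ℝ) K, |(η - yh) * ρ0 η| ≤ C := by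
    intro K
    obtain ⟨M, hM⟩ := hρ0loc K
    refine ⟨(|K| + |yh|) * M, fun η hη => ?_⟩
    have hρ := hρ0pos η hη.1
    have hMη := hM η hη
    rw [abs_mul, abs_of_pos hρ]
    have h2 : |η - yh| ≤ |K| + |yh| := by
      have := abs_sub η yh
      have h6 : |η| ≤ |K| := by
        rw [abs_of_nonneg hη.1]; exact le_trans hη.2 (le_abs_self K)
      linarith
    exact mul_le_mul h2 hMη hρ.le (le_trans (abs_nonneg _) h2)
  have hgI : ∀ {a b : ℝ}, 0 ≤ a → 0 ≤ b →
      IntervalIntegrable (fun η => (t * u0 η + η - x) * ρ0 η) volume a b :=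
    fun {a b} ha hb => II0 _ hgmeas hgb ha hb
  have hhI : ∀ {a b : ℝ}, 0 ≤ a → 0 ≤ b →
      IntervalIntegrable (fun η => (η - yh) * ρ0 η) volume a b :=
    fun {a b} ha hb => II0 _ hhmeas hhb ha hb
  -- key convexity identity
  have key : ∀ z : ℝ, 0 ≤ z → Fpot ρ0 u0 z x' t' =
      θ * Fpot ρ0 u0 z x t + (1 - θ) * ∫ η in (0:ℝ)..z, (η - yh) * ρ0 η := by
    intro z hz
    unfold Fpot
    rw [← intervalIntegral.integral_const_mul, ← intervalIntegral.integral_const_mul,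
      ← intervalIntegral.integral_add ((hgI le_rfl hz).const_mul θ)
        ((hhI le_rfl hz).const_mul (1 - θ))]
    apply intervalIntegral.integral_congr
    intro η _
    subst hx' ht'
    ring
  -- splitting the linear part
  have hsplit : (∫ η in (0:ℝ)..y, (η - yh) * ρ0 η) - (∫ η in (0:ℝ)..yh, (η - yh) * ρ0 η)
      = ∫ η in yh..y, (η - yh) * ρ0 η :=
    intervalIntegral.integral_interval_sub_left (hhI le_rfl hy) (hhI le_rfl hyh0)
  -- strict positivity of the difference
  have hpos : 0 < ∫ η in yh..y, (η - yh) * ρ0 η := by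
    rcases lt_or_gt_of_ne hne with h | h
    · rw [intervalIntegral.integral_symm, ← intervalIntegral.integral_neg]
      apply intervalIntegral.intervalIntegral_pos_of_pos_on ((hhI hy hyh0).neg)
      · intro η hη
        have hρ := hρ0pos η (le_trans hy hη.1.le)
        simp only [Pi.neg_apply]
        nlinarith [hη.2]
      · exact h
    · apply intervalIntegral.intervalIntegral_pos_of_pos_on (hhI hyh0 hy)
      · intro η hη
        have hρ := hρ0pos η (le_trans hyh0 hη.1.le)
        nlinarith [hη.1]
      · exact h
  have h1 : Fpot ρ0 u0 yh x t ≤ Fpot ρ0 u0 y x t := hmin y hy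
  rw [key y hy, key yh hyh0]
  nlinarith [mul_pos (by linarith : (0:ℝ) < 1 - θ) hpos,
    mul_le_mul_of_nonneg_left h1 θ0.le]
end

section
/- Fix x > 0 and t > 0, and let τ₁ be a minimizer of τ ↦ G(τ,x,t) over [0,∞). Then for any point (x̄,t̄) lying strictly between (0,τ₁) and (x,t) on the line segment joining them, τ₁ is the unique minimizer of τ ↦ G(τ,x̄,t̄) over [0,∞); that is, G(τ,x̄,t̄) > G(τ₁,x̄,t̄) for every τ ≥ 0 with τ ≠ τ₁. -/
open MeasureTheory Set Filter

lemma II_of_bdd {f : ℝ → ℝ} (hf : Measurable f) {a b C : ℝ}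
    (h : ∀ η ∈ Set.uIoc a b, |f η| ≤ C) :
    IntervalIntegrable f MeasureTheory.volume a b := by
  rw [intervalIntegrable_iff]
  refine MeasureTheory.Integrable.mono'
    (MeasureTheory.integrableOn_const (C := C)
      (hs := (measure_Ioc_lt_top : volume (Set.Ioc (min a b) (max a b)) < ⊤).ne))
    hf.aestronglyMeasurable.restrict ?_
  refine (MeasureTheory.ae_restrict_iff' measurableSet_uIoc).2 (ae_of_all _ ?_)
  simpa [Real.norm_eq_abs] using h

lemma II_main (ρb ub : ℝ → ℝ) (hρb : Measurable ρb) (hub : Measurable ub)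
    (hρbpos : ∀ η, 0 ≤ η → 0 < ρb η)
    (hρbloc : ∀ K : ℝ, ∃ M : ℝ, ∀ η ∈ Set.Icc (0:ℝ) K, ρb η ≤ M)
    (hubbdd : ∃ M : ℝ, ∀ η, 0 ≤ η → |ub η| ≤ M)
    (w : ℝ → ℝ) (hw : Measurable w)
    (hwb : ∀ K : ℝ, ∃ C : ℝ, ∀ η ∈ Set.Icc (0:ℝ) K, |w η| ≤ C)
    (a b : ℝ) (ha : 0 ≤ a) (hb : 0 ≤ b) :
    IntervalIntegrable (fun η => w η * (ρb η * ub η)) MeasureTheory.volume a b := by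
  set K := max a b with hK
  obtain ⟨Mρ, hMρ⟩ := hρbloc K
  obtain ⟨Mu, hMu⟩ := hubbdd
  obtain ⟨Cw, hCw⟩ := hwb K
  refine II_of_bdd (hw.mul (hρb.mul hub)) (C := Cw * (Mρ * Mu)) ?_
  intro η hη
  have hmin : 0 ≤ min a b := le_min ha hb
  have hη0 : 0 ≤ η := le_of_lt (lt_of_le_of_lt hmin hη.1)
  have hηI : η ∈ Set.Icc (0:ℝ) K := ⟨hη0, hη.2⟩
  have hub' : |ub η| ≤ Mu := hMu η hη0
  have hρ' : |ρb η| ≤ Mρ := by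
    rw [abs_of_pos (hρbpos η hη0)]; exact hMρ η hηI
  have hCw0 : 0 ≤ Cw := le_trans (abs_nonneg _) (hCw η hηI)
  have hB : |ρb η * ub η| ≤ Mρ * Mu := by
    rw [abs_mul]
    exact mul_le_mul hρ' hub' (abs_nonneg _) (le_trans (abs_nonneg _) hρ')
  calc |w η * (ρb η * ub η)| = |w η| * |ρb η * ub η| := abs_mul _ _
    _ ≤ Cw * (Mρ * Mu) := mul_le_mul (hCw η hηI) hB (abs_nonneg _) hCw0

theorem stmt5
    (ρ0 u0 ρb ub : ℝ → ℝ)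
    (hρ0meas : Measurable ρ0) (hu0meas : Measurable u0)
    (hρbmeas : Measurable ρb) (hubmeas : Measurable ub)
    (hρ0pos : ∀ η, 0 ≤ η → 0 < ρ0 η)
    (hρbpos : ∀ η, 0 ≤ η → 0 < ρb η)
    (hubpos : ∀ η, 0 ≤ η → 0 < ub η)
    (hρ0loc : ∀ K : ℝ, ∃ M : ℝ, ∀ η ∈ Set.Icc (0:ℝ) K, ρ0 η ≤ M)
    (hρbloc : ∀ K : ℝ, ∃ M : ℝ, ∀ η ∈ Set.Icc (0:ℝ) K, ρb η ≤ M)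
    (hu0bdd : ∃ M : ℝ, ∀ η, 0 ≤ η → |u0 η| ≤ M)
    (hubbdd : ∃ M : ℝ, ∀ η, 0 ≤ η → |ub η| ≤ M)
    (x t τ₁ : ℝ) (hx : 0 < x) (ht : 0 < t)
    (hτ₁ : MinimizesOn (fun τ => Gpot ρb ub τ x t) τ₁)
    (θ xb tb : ℝ) (hθ : θ ∈ Set.Ioo (0:ℝ) 1)
    (hxb : xb = θ * x) (htb : tb = (1 - θ) * τ₁ + θ * t) :
    ∀ τ, 0 ≤ τ → τ ≠ τ₁ → Gpot ρb ub τ₁ xb tb < Gpot ρb ub τ xb tb := by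
  obtain ⟨hτ₁0, hmin⟩ := hτ₁
  have hθ0 : 0 < θ := hθ.1
  have hθ1 : θ < 1 := hθ.2
  obtain ⟨Mu, hMu⟩ := hubbdd
  -- integrability of the G-type integrands
  have hint : ∀ (c d a b : ℝ), 0 ≤ a → 0 ≤ b →
      IntervalIntegrable (fun η => (c - ub η * (d - η)) * (ρb η * ub η))
        MeasureTheory.volume a b := by
    intro c d a b ha hb
    refine II_main ρb ub hρbmeas hubmeas hρbpos hρbloc ⟨Mu, hMu⟩
      (fun η => c - ub η * (d - η)) (by fun_prop) ?_ a b ha hb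
    intro K
    refine ⟨|c| + Mu * (|d| + K), ?_⟩
    intro η hη
    have hη0 : (0:ℝ) ≤ η := hη.1
    have h1 : |ub η| ≤ Mu := hMu η hη0
    have hMu0 : 0 ≤ Mu := le_trans (abs_nonneg _) h1
    have h2 : |d - η| ≤ |d| + K := by
      calc |d - η| ≤ |d| + |η| := by
            simpa [Real.norm_eq_abs] using norm_sub_le d η
        _ = |d| + η := by rw [abs_of_nonneg hη0]
        _ ≤ |d| + K := by linarith [hη.2]
    have h3 : |ub η * (d - η)| ≤ Mu * (|d| + K) := by
      rw [abs_mul]; exact mul_le_mul h1 h2 (abs_nonneg _) hMu0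
    have h4 : |c - ub η * (d - η)| ≤ |c| + |ub η| * |d - η| := by
      simpa [Real.norm_eq_abs] using norm_sub_le c (ub η * (d - η))
    have h5 : |ub η| * |d - η| ≤ Mu * (|d| + K) :=
      mul_le_mul h1 h2 (abs_nonneg _) hMu0
    linarith
  -- integrability of the entropy-type integrand
  have hgint : ∀ (a b : ℝ), 0 ≤ a → 0 ≤ b →
      IntervalIntegrable (fun η => ((η - τ₁) * ub η) * (ρb η * ub η))
        MeasureTheory.volume a b := by
    intro a b ha hb
    refine II_main ρb ub hρbmeas hubmeas hρbpos hρbloc ⟨Mu, hMu⟩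
      (fun η => (η - τ₁) * ub η) (by fun_prop) ?_ a b ha hb
    intro K
    refine ⟨(K + |τ₁|) * Mu, ?_⟩
    intro η hη
    have hη0 : (0:ℝ) ≤ η := hη.1
    have h1 : |ub η| ≤ Mu := hMu η hη0
    have hMu0 : 0 ≤ Mu := le_trans (abs_nonneg _) h1
    have h2 : |η - τ₁| ≤ K + |τ₁| := by
      calc |η - τ₁| ≤ |η| + |τ₁| := by
            simpa [Real.norm_eq_abs] using norm_sub_le η τ₁
        _ = η + |τ₁| := by rw [abs_of_nonneg hη0]
        _ ≤ K + |τ₁| := by linarith [hη.2]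
    rw [abs_mul]; exact mul_le_mul h2 h1 (abs_nonneg _)
      (by have := abs_nonneg τ₁; linarith [hη.2, hη.1])
  intro τ hτ hne
  -- difference formulas
  have hdiffb : Gpot ρb ub τ xb tb - Gpot ρb ub τ₁ xb tb
      = ∫ η in τ₁..τ, (xb - ub η * (tb - η)) * (ρb η * ub η) := by
    simp only [Gpot]
    exact intervalIntegral.integral_interval_sub_left
      (hint xb tb 0 τ le_rfl hτ) (hint xb tb 0 τ₁ le_rfl hτ₁0)
  have hdiff1 : Gpot ρb ub τ x t - Gpot ρb ub τ₁ x t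
      = ∫ η in τ₁..τ, (x - ub η * (t - η)) * (ρb η * ub η) := by
    simp only [Gpot]
    exact intervalIntegral.integral_interval_sub_left
      (hint x t 0 τ le_rfl hτ) (hint x t 0 τ₁ le_rfl hτ₁0)
  -- splitting identity
  have hsplit : (∫ η in τ₁..τ, (xb - ub η * (tb - η)) * (ρb η * ub η))
      = θ * (∫ η in τ₁..τ, (x - ub η * (t - η)) * (ρb η * ub η))
        + (1 - θ) * (∫ η in τ₁..τ, ((η - τ₁) * ub η) * (ρb η * ub η)) := by
    rw [← intervalIntegral.integral_const_mul, ← intervalIntegral.integral_const_mul,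
      ← intervalIntegral.integral_add ((hint x t τ₁ τ hτ₁0 hτ).const_mul θ)
        ((hgint τ₁ τ hτ₁0 hτ).const_mul (1 - θ))]
    apply intervalIntegral.integral_congr
    intro η hη
    simp only
    subst hxb htb
    ring
  have hI1 : 0 ≤ ∫ η in τ₁..τ, (x - ub η * (t - η)) * (ρb η * ub η) := by
    have := hmin τ hτ
    simp only at this
    linarith [hdiff1]
  have hI2 : 0 < ∫ η in τ₁..τ, ((η - τ₁) * ub η) * (ρb η * ub η) := by
    rcases lt_or_gt_of_ne hne with hlt | hgt
    · -- τ < τ₁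
      rw [intervalIntegral.integral_symm]
      have hpos : 0 < ∫ η in τ..τ₁, -(((η - τ₁) * ub η) * (ρb η * ub η)) := by
        refine intervalIntegral.intervalIntegral_pos_of_pos_on
          ((hgint τ τ₁ hτ hτ₁0).neg) ?_ hlt
        intro η hη
        have hη0 : 0 ≤ η := le_trans hτ hη.1.le
        have : ((η - τ₁) * ub η) * (ρb η * ub η) < 0 :=
          mul_neg_of_neg_of_pos
            (mul_neg_of_neg_of_pos (sub_neg.2 hη.2) (hubpos η hη0))
            (mul_pos (hρbpos η hη0) (hubpos η hη0))
        linarith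
      rw [intervalIntegral.integral_neg] at hpos
      linarith
    · refine intervalIntegral.intervalIntegral_pos_of_pos_on
        (hgint τ₁ τ hτ₁0 hτ) ?_ hgt
      intro η hη
      have hη0 : 0 ≤ η := le_trans hτ₁0 hη.1.le
      exact mul_pos (mul_pos (sub_pos.2 hη.1) (hubpos η hη0))
        (mul_pos (hρbpos η hη0) (hubpos η hη0))
  have h1 : 0 ≤ θ * _ := mul_nonneg hθ0.le hI1
  have h2 : 0 < (1 - θ) * _ := mul_pos (by linarith) hI2
  linarith [hdiffb, hsplit]
end

section
/- Fix t > 0 and suppose the set I(t) = {x ≥ 0 : F(x,t) = G(x,t)} contains more than one point, say I(t) = [l(t), r(t)] with l(t) < r(t). Then: (1) F(x,t) = G(x,t) = 0 for all x ∈ I(t); (2) τ_*(x,t) = τ^*(x,t) = 0 for all x ∈ (l(t), r(t)], and τ_*(l(t),t) = 0; (3) y_*(x,t) = y^*(x,t) = 0 for all x ∈ [l(t), r(t)), and y_*(r(t),t) = 0. -/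
open MeasureTheory Set Filter

lemma aux_ii {f : ℝ → ℝ} (hf : Measurable f) {y M : ℝ} (hy : 0 ≤ y)
    (hb : ∀ η ∈ Set.Icc (0:ℝ) y, |f η| ≤ M) :
    IntervalIntegrable f volume 0 y := by
  rw [intervalIntegrable_iff_integrableOn_Ioc_of_le hy]
  have hc : IntegrableOn (fun _ : ℝ => M) (Set.Ioc 0 y) volume :=
    integrableOn_const measure_Ioc_lt_top.ne
  refine Integrable.mono' hc hf.aestronglyMeasurable.restrict ?_
  filter_upwards [ae_restrict_mem measurableSet_Ioc] with a ha
  exact hb a ⟨ha.1.le, ha.2⟩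

theorem stmt7
    (ρ0 u0 ρb ub : ℝ → ℝ)
    (hρ0meas : Measurable ρ0) (hu0meas : Measurable u0)
    (hρbmeas : Measurable ρb) (hubmeas : Measurable ub)
    (hρ0pos : ∀ η, 0 ≤ η → 0 < ρ0 η)
    (hρbpos : ∀ η, 0 ≤ η → 0 < ρb η)
    (hubpos : ∀ η, 0 ≤ η → 0 < ub η)
    (hρ0loc : ∀ K : ℝ, ∃ M : ℝ, ∀ η ∈ Set.Icc (0:ℝ) K, ρ0 η ≤ M)
    (hρbloc : ∀ K : ℝ, ∃ M : ℝ, ∀ η ∈ Set.Icc (0:ℝ) K, ρb η ≤ M)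
    (hu0bdd : ∃ M : ℝ, ∀ η, 0 ≤ η → |u0 η| ≤ M)
    (hubbdd : ∃ M : ℝ, ∀ η, 0 ≤ η → |ub η| ≤ M)
    (Fm Gm : ℝ → ℝ → ℝ)
    (hFm : ∀ x t, 0 ≤ x → 0 ≤ t → IsMinValue (fun y => Fpot ρ0 u0 y x t) (Fm x t))
    (hGm : ∀ x t, 0 ≤ x → 0 ≤ t → IsMinValue (fun τ => Gpot ρb ub τ x t) (Gm x t))
    (ys yS τs τS : ℝ → ℝ → ℝ)
    (hys : ∀ x t, 0 ≤ x → 0 ≤ t → SmallestMinimizer (fun y => Fpot ρ0 u0 y x t) (ys x t))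
    (hyS : ∀ x t, 0 ≤ x → 0 ≤ t → LargestMinimizer (fun y => Fpot ρ0 u0 y x t) (yS x t))
    (hτs : ∀ x t, 0 ≤ x → 0 ≤ t → SmallestMinimizer (fun τ => Gpot ρb ub τ x t) (τs x t))
    (hτS : ∀ x t, 0 ≤ x → 0 ≤ t → LargestMinimizer (fun τ => Gpot ρb ub τ x t) (τS x t))
    (t l r : ℝ) (ht : 0 < t) (hlr : l < r)
    (hI : {x : ℝ | 0 ≤ x ∧ Fm x t = Gm x t} = Set.Icc l r) :
    (∀ x ∈ Set.Icc l r, Fm x t = 0 ∧ Gm x t = 0) ∧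
    ((∀ x ∈ Set.Ioc l r, τs x t = 0 ∧ τS x t = 0) ∧ τs l t = 0) ∧
    ((∀ x ∈ Set.Ico l r, ys x t = 0 ∧ yS x t = 0) ∧ ys r t = 0) := by
  -- basic integrability
  have hρ0ii : ∀ y : ℝ, 0 ≤ y → IntervalIntegrable ρ0 volume 0 y := by
    intro y hy
    obtain ⟨M, hM⟩ := hρ0loc y
    refine aux_ii hρ0meas hy (M := M) fun η hη => ?_
    rw [abs_of_pos (hρ0pos η hη.1)]; exact hM η hη
  have hρbubii : ∀ τ : ℝ, 0 ≤ τ →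
      IntervalIntegrable (fun η => ρb η * ub η) volume 0 τ := by
    intro τ hτ
    obtain ⟨M, hM⟩ := hρbloc τ
    obtain ⟨Mb, hMb⟩ := hubbdd
    refine aux_ii (hρbmeas.mul hubmeas) hτ (M := M * Mb) fun η hη => ?_
    rw [Pi.mul_apply, abs_mul, abs_of_pos (hρbpos η hη.1)]
    exact mul_le_mul (hM η hη) (hMb η hη.1) (abs_nonneg _)
      ((hρbpos η hη.1).le.trans (hM η hη))
  have hFii : ∀ y x : ℝ, 0 ≤ y →
      IntervalIntegrable (fun η => (t * u0 η + η - x) * ρ0 η) volume 0 y := by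
    intro y x hy
    obtain ⟨M, hM⟩ := hρ0loc y
    obtain ⟨Mu, hMu⟩ := hu0bdd
    have hmeas : Measurable (fun η => (t * u0 η + η - x) * ρ0 η) :=
      (((measurable_const.mul hu0meas).add measurable_id).sub measurable_const).mul hρ0meas
    refine aux_ii hmeas hy (M := (t * Mu + y + |x|) * M) fun η hη => ?_
    have hρ := hρ0pos η hη.1
    have hMρ := hM η hη
    have hu := abs_le.mp (hMu η hη.1)
    rw [abs_mul, abs_of_pos hρ]
    have h1 : |t * u0 η + η - x| ≤ t * Mu + y + |x| := by
      rw [abs_le]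
      constructor <;> nlinarith [le_abs_self x, neg_abs_le x, hη.1, hη.2, ht.le]
    exact mul_le_mul h1 hMρ hρ.le ((abs_nonneg _).trans h1)
  have hGii : ∀ τ x : ℝ, 0 ≤ τ →
      IntervalIntegrable (fun η => (x - ub η * (t - η)) * (ρb η * ub η)) volume 0 τ := by
    intro τ x hτ
    obtain ⟨M, hM⟩ := hρbloc τ
    obtain ⟨Mb, hMb⟩ := hubbdd
    have hmeas : Measurable (fun η => (x - ub η * (t - η)) * (ρb η * ub η)) :=
      (measurable_const.sub (hubmeas.mul (measurable_const.sub measurable_id))).mul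
        (hρbmeas.mul hubmeas)
    have hMb0 : 0 ≤ Mb := (abs_nonneg _).trans (hMb 0 le_rfl)
    refine aux_ii hmeas hτ (M := (|x| + Mb * (t + τ)) * (M * Mb)) fun η hη => ?_
    have hρ := hρbpos η hη.1
    have hMρ := hM η hη
    have hu := abs_le.mp (hMb η hη.1)
    rw [abs_mul]
    have h1 : |x - ub η * (t - η)| ≤ |x| + Mb * (t + τ) := by
      rw [abs_le]
      constructor <;> nlinarith [le_abs_self x, neg_abs_le x, hη.1, hη.2, ht.le,
        mul_le_mul (hMb η hη.1) (le_refl |t - η|) (abs_nonneg _) hMb0]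
    have h2 : |ρb η * ub η| ≤ M * Mb := by
      rw [abs_mul, abs_of_pos hρ]
      exact mul_le_mul hMρ (hMb η hη.1) (abs_nonneg _) (hρ.le.trans hMρ)
    exact mul_le_mul h1 h2 (abs_nonneg _) ((abs_nonneg _).trans h1)
  -- shift identities
  have hFshift : ∀ y x x' : ℝ, 0 ≤ y →
      Fpot ρ0 u0 y x' t = Fpot ρ0 u0 y x t + (x - x') * ∫ η in (0:ℝ)..y, ρ0 η := by
    intro y x x' hy
    unfold Fpot
    rw [← intervalIntegral.integral_const_mul,
      ← intervalIntegral.integral_add (hFii y x hy) ((hρ0ii y hy).const_mul _)]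
    apply intervalIntegral.integral_congr
    intro η _; dsimp; ring
  have hGshift : ∀ τ x x' : ℝ, 0 ≤ τ →
      Gpot ρb ub τ x t = Gpot ρb ub τ x' t + (x - x') * ∫ η in (0:ℝ)..τ, ρb η * ub η := by
    intro τ x x' hτ
    unfold Gpot
    rw [← intervalIntegral.integral_const_mul,
      ← intervalIntegral.integral_add (hGii τ x' hτ) ((hρbubii τ hτ).const_mul _)]
    apply intervalIntegral.integral_congr
    intro η _; dsimp; ring
  have hF0 : ∀ x : ℝ, Fpot ρ0 u0 0 x t = 0 := by intro x; simp [Fpot]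
  have hG0 : ∀ x : ℝ, Gpot ρb ub 0 x t = 0 := by intro x; simp [Gpot]
  -- positivity of the weight integrals
  have hρ0nn : ∀ y : ℝ, 0 ≤ y → 0 ≤ ∫ η in (0:ℝ)..y, ρ0 η := fun y hy =>
    intervalIntegral.integral_nonneg hy fun η hη => (hρ0pos η hη.1).le
  have hρ0p : ∀ y : ℝ, 0 < y → 0 < ∫ η in (0:ℝ)..y, ρ0 η := fun y hy =>
    intervalIntegral.intervalIntegral_pos_of_pos_on (hρ0ii y hy.le)
      (fun η hη => hρ0pos η hη.1.le) hy
  have hρbubnn : ∀ τ : ℝ, 0 ≤ τ → 0 ≤ ∫ η in (0:ℝ)..τ, ρb η * ub η := fun τ hτ =>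
    intervalIntegral.integral_nonneg hτ fun η hη =>
      (mul_pos (hρbpos η hη.1) (hubpos η hη.1)).le
  have hρbubp : ∀ τ : ℝ, 0 < τ → 0 < ∫ η in (0:ℝ)..τ, ρb η * ub η := fun τ hτ =>
    intervalIntegral.intervalIntegral_pos_of_pos_on (hρbubii τ hτ.le)
      (fun η hη => mul_pos (hρbpos η hη.1.le) (hubpos η hη.1.le)) hτ
  -- membership facts
  have hmem : ∀ x ∈ Set.Icc l r, 0 ≤ x ∧ Fm x t = Gm x t := by
    intro x hx; rw [← hI] at hx; exact hx
  have hl0 : 0 ≤ l := (hmem l ⟨le_rfl, hlr.le⟩).1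
  -- min values are ≤ 0
  have hFle : ∀ x : ℝ, 0 ≤ x → Fm x t ≤ 0 := by
    intro x hx
    have h := (hFm x t hx ht.le).2 0 le_rfl
    simpa [hF0 x] using h
  have hGle : ∀ x : ℝ, 0 ≤ x → Gm x t ≤ 0 := by
    intro x hx
    have h := (hGm x t hx ht.le).2 0 le_rfl
    simpa [hG0 x] using h
  -- monotonicity
  have hFanti : ∀ x x' : ℝ, 0 ≤ x → x ≤ x' → Fm x' t ≤ Fm x t := by
    intro x x' hx hxx
    obtain ⟨a, ha0, haeq⟩ := (hFm x t hx ht.le).1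
    have haeq' : Fpot ρ0 u0 a x t = Fm x t := haeq
    have h1 : Fm x' t ≤ Fpot ρ0 u0 a x' t := (hFm x' t (hx.trans hxx) ht.le).2 a ha0
    have h2 := hFshift a x x' ha0
    have h3 : (x - x') * ∫ η in (0:ℝ)..a, ρ0 η ≤ 0 :=
      mul_nonpos_of_nonpos_of_nonneg (by linarith) (hρ0nn a ha0)
    linarith
  have hGmono : ∀ x x' : ℝ, 0 ≤ x → x ≤ x' → Gm x t ≤ Gm x' t := by
    intro x x' hx hxx
    obtain ⟨a, ha0, haeq⟩ := (hGm x' t (hx.trans hxx) ht.le).1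
    have haeq' : Gpot ρb ub a x' t = Gm x' t := haeq
    have h1 : Gm x t ≤ Gpot ρb ub a x t := (hGm x t hx ht.le).2 a ha0
    have h2 := hGshift a x' x ha0
    have h3 : 0 ≤ (x' - x) * ∫ η in (0:ℝ)..a, ρb η * ub η :=
      mul_nonneg (by linarith) (hρbubnn a ha0)
    linarith
  -- the midpoint
  set x0 : ℝ := (l + r) / 2 with hx0def
  have hlx0 : l < x0 := by rw [hx0def]; linarith
  have hx0r : x0 < r := by rw [hx0def]; linarith
  have hx00 : 0 ≤ x0 := hl0.trans hlx0.le
  have hx0mem : x0 ∈ Set.Icc l r := ⟨hlx0.le, hx0r.le⟩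
  set x1 : ℝ := (l + x0) / 2 with hx1def
  have hlx1 : l ≤ x1 := by rw [hx1def]; linarith
  have hx1x0 : x1 < x0 := by rw [hx1def]; linarith
  have hx10 : 0 ≤ x1 := hl0.trans hlx1
  have hx1mem : x1 ∈ Set.Icc l r := ⟨hlx1, by linarith⟩
  -- Gm x0 t = 0
  have hGx0 : Gm x0 t = 0 := by
    by_contra hne
    have hlt : Gm x0 t < 0 := lt_of_le_of_ne (hGle x0 hx00) hne
    obtain ⟨a, ha0, haeq⟩ := (hGm x0 t hx00 ht.le).1
    have haeq' : Gpot ρb ub a x0 t = Gm x0 t := haeq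
    have hapos : 0 < a := by
      rcases ha0.lt_or_eq with h | h
      · exact h
      · exfalso; rw [← h, hG0 x0] at haeq'; linarith
    have hsh := hGshift a x0 x1 ha0
    have hpos : 0 < (x0 - x1) * ∫ η in (0:ℝ)..a, ρb η * ub η :=
      mul_pos (by linarith) (hρbubp a hapos)
    have h1 : Gm x1 t ≤ Gpot ρb ub a x1 t := (hGm x1 t hx10 ht.le).2 a ha0
    have e1 : Fm x1 t = Gm x1 t := (hmem x1 hx1mem).2
    have e0 : Fm x0 t = Gm x0 t := (hmem x0 hx0mem).2
    have hF10 : Fm x0 t ≤ Fm x1 t := hFanti x1 x0 hx10 hx1x0.le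
    linarith
  have hFx0 : Fm x0 t = 0 := by rw [(hmem x0 hx0mem).2, hGx0]
  -- part 1
  have hboth : ∀ x ∈ Set.Icc l r, Fm x t = 0 ∧ Gm x t = 0 := by
    intro x hx
    obtain ⟨hx0le, hFG⟩ := hmem x hx
    rcases le_total x x0 with h | h
    · have h1 : Fm x0 t ≤ Fm x t := hFanti x x0 hx0le h
      have h2 := hFle x hx0le
      have hFx : Fm x t = 0 := le_antisymm h2 (by linarith)
      exact ⟨hFx, by rw [← hFG]; exact hFx⟩
    · have h1 : Gm x0 t ≤ Gm x t := hGmono x0 x hx00 h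
      have h2 := hGle x hx0le
      have hGx : Gm x t = 0 := le_antisymm h2 (by linarith)
      exact ⟨by rw [hFG]; exact hGx, hGx⟩
  refine ⟨hboth, ⟨?_, ?_⟩, ?_, ?_⟩
  · -- τs = τS = 0 on (l, r]
    intro x hx
    have hxmem : x ∈ Set.Icc l r := ⟨hx.1.le, hx.2⟩
    have hx0le : 0 ≤ x := (hmem x hxmem).1
    have hGx : Gm x t = 0 := (hboth x hxmem).2
    obtain ⟨hminS, hlargeS⟩ := hτS x t hx0le ht.le
    have hval : Gpot ρb ub (τS x t) x t = 0 := by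
      obtain ⟨a, ha0, haeq⟩ := (hGm x t hx0le ht.le).1
      have haeq' : Gpot ρb ub a x t = Gm x t := haeq
      have h1 : Gpot ρb ub (τS x t) x t ≤ Gpot ρb ub a x t := hminS.2 a ha0
      have h2 : Gm x t ≤ Gpot ρb ub (τS x t) x t := (hGm x t hx0le ht.le).2 _ hminS.1
      linarith
    have hτSz : τS x t = 0 := by
      by_contra hne
      have hp : 0 < τS x t := lt_of_le_of_ne hminS.1 (Ne.symm hne)
      set z : ℝ := (l + x) / 2 with hzdef
      have hlz : l ≤ z := by rw [hzdef]; linarith [hx.1]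
      have hzx : z < x := by rw [hzdef]; linarith [hx.1]
      have hz0 : 0 ≤ z := hl0.trans hlz
      have hzmem : z ∈ Set.Icc l r := ⟨hlz, by linarith [hx.2]⟩
      have hGz : Gm z t = 0 := (hboth z hzmem).2
      have hsh := hGshift (τS x t) x z hminS.1
      have hpos : 0 < (x - z) * ∫ η in (0:ℝ)..τS x t, ρb η * ub η :=
        mul_pos (by linarith) (hρbubp _ hp)
      have h2 : Gm z t ≤ Gpot ρb ub (τS x t) z t := (hGm z t hz0 ht.le).2 _ hminS.1
      linarith
    have hτsz : τs x t = 0 := by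
      have h1 : 0 ≤ τs x t := (hτs x t hx0le ht.le).1.1
      have h2 : τs x t ≤ τS x t := (hτs x t hx0le ht.le).2 (τS x t) hminS
      rw [hτSz] at h2
      linarith
    exact ⟨hτsz, hτSz⟩
  · -- τs l t = 0
    have hGl : Gm l t = 0 := (hboth l ⟨le_rfl, hlr.le⟩).2
    have hminl : MinimizesOn (fun τ => Gpot ρb ub τ l t) 0 := by
      refine ⟨le_rfl, fun b hb => ?_⟩
      have h := (hGm l t hl0 ht.le).2 b hb
      show Gpot ρb ub 0 l t ≤ Gpot ρb ub b l t
      rw [hG0 l, ← hGl]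
      exact h
    have h1 : 0 ≤ τs l t := (hτs l t hl0 ht.le).1.1
    have h2 : τs l t ≤ 0 := (hτs l t hl0 ht.le).2 0 hminl
    linarith
  · -- ys = yS = 0 on [l, r)
    intro x hx
    have hxmem : x ∈ Set.Icc l r := ⟨hx.1, hx.2.le⟩
    have hx0le : 0 ≤ x := (hmem x hxmem).1
    have hFx : Fm x t = 0 := (hboth x hxmem).1
    obtain ⟨hminS, hlargeS⟩ := hyS x t hx0le ht.le
    have hval : Fpot ρ0 u0 (yS x t) x t = 0 := by
      obtain ⟨a, ha0, haeq⟩ := (hFm x t hx0le ht.le).1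
      have haeq' : Fpot ρ0 u0 a x t = Fm x t := haeq
      have h1 : Fpot ρ0 u0 (yS x t) x t ≤ Fpot ρ0 u0 a x t := hminS.2 a ha0
      have h2 : Fm x t ≤ Fpot ρ0 u0 (yS x t) x t := (hFm x t hx0le ht.le).2 _ hminS.1
      linarith
    have hySz : yS x t = 0 := by
      by_contra hne
      have hp : 0 < yS x t := lt_of_le_of_ne hminS.1 (Ne.symm hne)
      set z : ℝ := (x + r) / 2 with hzdef
      have hxz : x < z := by rw [hzdef]; linarith [hx.2]
      have hzr : z ≤ r := by rw [hzdef]; linarith [hx.2]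
      have hz0 : 0 ≤ z := hx0le.trans hxz.le
      have hzmem : z ∈ Set.Icc l r := ⟨by linarith [hx.1], hzr⟩
      have hFz : Fm z t = 0 := (hboth z hzmem).1
      have hsh := hFshift (yS x t) x z hminS.1
      have hneg : (x - z) * ∫ η in (0:ℝ)..yS x t, ρ0 η < 0 :=
        mul_neg_of_neg_of_pos (by linarith) (hρ0p _ hp)
      have h2 : Fm z t ≤ Fpot ρ0 u0 (yS x t) z t := (hFm z t hz0 ht.le).2 _ hminS.1
      linarith
    have hysz : ys x t = 0 := by
      have h1 : 0 ≤ ys x t := (hys x t hx0le ht.le).1.1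
      have h2 : ys x t ≤ yS x t := (hys x t hx0le ht.le).2 (yS x t) hminS
      rw [hySz] at h2
      linarith
    exact ⟨hysz, hySz⟩
  · -- ys r t = 0
    have hr0 : 0 ≤ r := hl0.trans hlr.le
    have hFr : Fm r t = 0 := (hboth r ⟨hlr.le, le_rfl⟩).1
    have hminr : MinimizesOn (fun y => Fpot ρ0 u0 y r t) 0 := by
      refine ⟨le_rfl, fun b hb => ?_⟩
      have h := (hFm r t hr0 ht.le).2 b hb
      show Fpot ρ0 u0 0 r t ≤ Fpot ρ0 u0 b r t
      rw [hF0 r, ← hFr]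
      exact h
    have h1 : 0 ≤ ys r t := (hys r t hr0 ht.le).1.1
    have h2 : ys r t ≤ 0 := (hys r t hr0 ht.le).2 0 hminr
    linarith
end

section
/- Fix t > 0 and suppose the set I(t) = {x ≥ 0 : F(x,t) = G(x,t)} has nonempty interior. Then: (4) for every t′ with 0 < t′ < t, the set I(t′) = {x ≥ 0 : F(x,t′) = G(x,t′)} also has nonempty interior; and (5) the set ⋃_{0 ≤ t′ ≤ t} I(t′) × {t′} ⊆ ℝ² is star-shaped with respect to the origin (0,0). -/
open MeasureTheory Set Filter

lemma aux_bddIntInt {f : ℝ → ℝ} (hf : Measurable f) {K C : ℝ} (hK : 0 ≤ K)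
    (hC : ∀ η ∈ Set.Icc (0:ℝ) K, |f η| ≤ C) :
    IntervalIntegrable f volume 0 K := by
  rw [intervalIntegrable_iff_integrableOn_Icc_of_le hK]
  refine Measure.integrableOn_of_bounded (by simp) hf.aestronglyMeasurable (M := C) ?_
  rw [ae_restrict_iff' measurableSet_Icc]
  filter_upwards with x hx using hC x hx

theorem stmt8
    (ρ0 u0 ρb ub : ℝ → ℝ)
    (hρ0meas : Measurable ρ0) (hu0meas : Measurable u0)
    (hρbmeas : Measurable ρb) (hubmeas : Measurable ub)
    (hρ0pos : ∀ η, 0 ≤ η → 0 < ρ0 η)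
    (hρbpos : ∀ η, 0 ≤ η → 0 < ρb η)
    (hubpos : ∀ η, 0 ≤ η → 0 < ub η)
    (hρ0loc : ∀ K : ℝ, ∃ M : ℝ, ∀ η ∈ Set.Icc (0:ℝ) K, ρ0 η ≤ M)
    (hρbloc : ∀ K : ℝ, ∃ M : ℝ, ∀ η ∈ Set.Icc (0:ℝ) K, ρb η ≤ M)
    (hu0bdd : ∃ M : ℝ, ∀ η, 0 ≤ η → |u0 η| ≤ M)
    (hubbdd : ∃ M : ℝ, ∀ η, 0 ≤ η → |ub η| ≤ M)
    (Fm Gm : ℝ → ℝ → ℝ)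
    (hFm : ∀ x t, 0 ≤ x → 0 ≤ t → IsMinValue (fun y => Fpot ρ0 u0 y x t) (Fm x t))
    (hGm : ∀ x t, 0 ≤ x → 0 ≤ t → IsMinValue (fun τ => Gpot ρb ub τ x t) (Gm x t))
    (t : ℝ) (ht : 0 < t)
    (hne : (interior {x : ℝ | 0 ≤ x ∧ Fm x t = Gm x t}).Nonempty) :
    (∀ t', 0 < t' → t' < t →
      (interior {x : ℝ | 0 ≤ x ∧ Fm x t' = Gm x t'}).Nonempty) ∧
    StarConvex ℝ ((0:ℝ), (0:ℝ))
      {p : ℝ × ℝ | 0 ≤ p.2 ∧ p.2 ≤ t ∧ 0 ≤ p.1 ∧ Fm p.1 p.2 = Gm p.1 p.2} := by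
  obtain ⟨Mu, hMu⟩ := hu0bdd
  obtain ⟨Mub, hMub⟩ := hubbdd
  have hMu0 : 0 ≤ Mu := le_trans (abs_nonneg _) (hMu 0 le_rfl)
  have hMub0 : 0 ≤ Mub := le_trans (abs_nonneg _) (hMub 0 le_rfl)
  -- integrability of ρ0 on [0,y]
  have hρ0int : ∀ y : ℝ, 0 ≤ y → IntervalIntegrable ρ0 volume 0 y := by
    intro y hy
    obtain ⟨M, hM⟩ := hρ0loc y
    exact aux_bddIntInt hρ0meas hy fun η hη => by
      rw [abs_of_pos (hρ0pos η hη.1)]; exact hM η hη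
  -- integrability of the F integrand
  have hFint : ∀ x s y : ℝ, 0 ≤ y →
      IntervalIntegrable (fun η => (s * u0 η + η - x) * ρ0 η) volume 0 y := by
    intro x s y hy
    obtain ⟨M, hM⟩ := hρ0loc y
    have hmeas : Measurable fun η => (s * u0 η + η - x) * ρ0 η := by
      exact (((measurable_const.mul hu0meas).add measurable_id).sub measurable_const).mul hρ0meas
    refine aux_bddIntInt hmeas hy (C := (|s| * Mu + y + |x|) * M) fun η hη => ?_
    have hρ := hρ0pos η hη.1
    have h1 : |s * u0 η + η - x| ≤ |s| * Mu + y + |x| := by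
      calc |s * u0 η + η - x| = |s * u0 η + (η - x)| := by ring_nf
        _ ≤ |s * u0 η| + |η - x| := abs_add_le _ _
        _ ≤ |s| * Mu + (|η| + |x|) := by
            refine add_le_add ?_ (abs_sub _ _)
            rw [abs_mul]
            exact mul_le_mul_of_nonneg_left (hMu η hη.1) (abs_nonneg s)
        _ ≤ |s| * Mu + (y + |x|) := by
            have : |η| ≤ y := by rw [abs_of_nonneg hη.1]; exact hη.2
            linarith
        _ = |s| * Mu + y + |x| := by ring
    calc |(s * u0 η + η - x) * ρ0 η| = |s * u0 η + η - x| * ρ0 η := by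
          rw [abs_mul, abs_of_pos hρ]
      _ ≤ (|s| * Mu + y + |x|) * M :=
          mul_le_mul h1 (hM η hη) hρ.le (le_trans (abs_nonneg _) h1)
  -- integrability of the G integrand
  have hGint : ∀ x s τ : ℝ, 0 ≤ τ →
      IntervalIntegrable (fun η => (x - ub η * (s - η)) * (ρb η * ub η)) volume 0 τ := by
    intro x s τ hτ
    obtain ⟨M, hM⟩ := hρbloc τ
    have hM0 : 0 ≤ M := le_trans (hρbpos 0 le_rfl).le (hM 0 ⟨le_rfl, hτ⟩)
    have hmeas : Measurable fun η => (x - ub η * (s - η)) * (ρb η * ub η) := by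
      exact (measurable_const.sub (hubmeas.mul (measurable_const.sub measurable_id))).mul
        (hρbmeas.mul hubmeas)
    refine aux_bddIntInt hmeas hτ (C := (|x| + Mub * (|s| + τ)) * (M * Mub)) fun η hη => ?_
    have hρ := hρbpos η hη.1
    have h1 : |x - ub η * (s - η)| ≤ |x| + Mub * (|s| + τ) := by
      calc |x - ub η * (s - η)| ≤ |x| + |ub η * (s - η)| := abs_sub _ _
        _ ≤ |x| + Mub * (|s| + τ) := by
            have h2 : |ub η * (s - η)| = |ub η| * |s - η| := abs_mul _ _
            have h3 : |s - η| ≤ |s| + τ := by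
              calc |s - η| ≤ |s| + |η| := abs_sub _ _
                _ ≤ |s| + τ := by
                    have : |η| ≤ τ := by rw [abs_of_nonneg hη.1]; exact hη.2
                    linarith
            have := mul_le_mul (hMub η hη.1) h3 (abs_nonneg _) hMub0
            rw [h2]; linarith
    have h4 : |ρb η * ub η| ≤ M * Mub := by
      rw [abs_mul, abs_of_pos hρ]
      exact mul_le_mul (hM η hη) (hMub η hη.1) (abs_nonneg _) hM0
    calc |(x - ub η * (s - η)) * (ρb η * ub η)|
        = |x - ub η * (s - η)| * |ρb η * ub η| := abs_mul _ _
      _ ≤ (|x| + Mub * (|s| + τ)) * (M * Mub) :=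
          mul_le_mul h1 h4 (abs_nonneg _) (le_trans (abs_nonneg _) h1)
  -- integrability of η ρ0 η and (η ub η)(ρb η ub η)
  have hEρint : ∀ y : ℝ, 0 ≤ y → IntervalIntegrable (fun η => η * ρ0 η) volume 0 y := by
    intro y hy
    obtain ⟨M, hM⟩ := hρ0loc y
    have hM0 : 0 ≤ M := le_trans (hρ0pos 0 le_rfl).le (hM 0 ⟨le_rfl, hy⟩)
    refine aux_bddIntInt (measurable_id.mul hρ0meas) hy (C := y * M) fun η hη => ?_
    simp only [Pi.mul_apply, id_eq]
    rw [abs_mul, abs_of_nonneg hη.1, abs_of_pos (hρ0pos η hη.1)]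
    exact mul_le_mul hη.2 (hM η hη) (hρ0pos η hη.1).le hy
  have hEbint : ∀ τ : ℝ, 0 ≤ τ →
      IntervalIntegrable (fun η => (η * ub η) * (ρb η * ub η)) volume 0 τ := by
    intro τ hτ
    obtain ⟨M, hM⟩ := hρbloc τ
    have hM0 : 0 ≤ M := le_trans (hρbpos 0 le_rfl).le (hM 0 ⟨le_rfl, hτ⟩)
    refine aux_bddIntInt ((measurable_id.mul hubmeas).mul (hρbmeas.mul hubmeas)) hτ
      (C := (τ * Mub) * (M * Mub)) fun η hη => ?_
    simp only [Pi.mul_apply, id_eq]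
    have hρ := hρbpos η hη.1
    rw [abs_mul]
    have h1 : |η * ub η| ≤ τ * Mub := by
      rw [abs_mul, abs_of_nonneg hη.1]
      exact mul_le_mul hη.2 (hMub η hη.1) (abs_nonneg _) hτ
    have h2 : |ρb η * ub η| ≤ M * Mub := by
      rw [abs_mul, abs_of_pos hρ]
      exact mul_le_mul (hM η hη) (hMub η hη.1) (abs_nonneg _) hM0
    exact mul_le_mul h1 h2 (abs_nonneg _) (mul_nonneg hτ hMub0)
  -- nonnegativity of the extra terms
  have hEρ0 : ∀ y : ℝ, 0 ≤ y → 0 ≤ ∫ η in (0:ℝ)..y, η * ρ0 η := fun y hy =>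
    intervalIntegral.integral_nonneg hy fun η hη => mul_nonneg hη.1 (hρ0pos η hη.1).le
  have hEb0 : ∀ τ : ℝ, 0 ≤ τ → 0 ≤ ∫ η in (0:ℝ)..τ, (η * ub η) * (ρb η * ub η) := fun τ hτ =>
    intervalIntegral.integral_nonneg hτ fun η hη =>
      mul_nonneg (mul_nonneg hη.1 (hubpos η hη.1).le)
        (mul_nonneg (hρbpos η hη.1).le (hubpos η hη.1).le)
  -- min values are ≤ 0
  have hFle0 : ∀ x s : ℝ, 0 ≤ x → 0 ≤ s → Fm x s ≤ 0 := by
    intro x s hx hs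
    have := (hFm x s hx hs).2 0 le_rfl
    simpa [Fpot] using this
  have hGle0 : ∀ x s : ℝ, 0 ≤ x → 0 ≤ s → Gm x s ≤ 0 := by
    intro x s hx hs
    have := (hGm x s hx hs).2 0 le_rfl
    simpa [Gpot] using this
  -- monotonicity in x
  have hFmono : ∀ s x1 x2 : ℝ, 0 ≤ s → 0 ≤ x1 → x1 ≤ x2 → Fm x2 s ≤ Fm x1 s := by
    intro s x1 x2 hs hx1 hx12
    obtain ⟨y, hy, hyv⟩ := (hFm x1 s hx1 hs).1
    have h2 := (hFm x2 s (hx1.trans hx12) hs).2 y hy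
    refine h2.trans ?_
    simp only at hyv ⊢
    rw [← hyv]
    unfold Fpot
    refine intervalIntegral.integral_mono_on hy (hFint x2 s y hy) (hFint x1 s y hy)
      fun η hη => ?_
    exact mul_le_mul_of_nonneg_right (by linarith) (hρ0pos η hη.1).le
  have hGmono : ∀ s x1 x2 : ℝ, 0 ≤ s → 0 ≤ x1 → x1 ≤ x2 → Gm x1 s ≤ Gm x2 s := by
    intro s x1 x2 hs hx1 hx12
    obtain ⟨τ, hτ, hτv⟩ := (hGm x2 s (hx1.trans hx12) hs).1
    have h2 := (hGm x1 s hx1 hs).2 τ hτ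
    refine h2.trans ?_
    simp only at hτv ⊢
    rw [← hτv]
    unfold Gpot
    refine intervalIntegral.integral_mono_on hτ (hGint x1 s τ hτ) (hGint x2 s τ hτ)
      fun η hη => ?_
    exact mul_le_mul_of_nonneg_right (by linarith)
      (mul_nonneg (hρbpos η hη.1).le (hubpos η hη.1).le)
  -- scaling identities
  have hFscale : ∀ x s l y : ℝ, 0 ≤ y →
      Fpot ρ0 u0 y (l * x) (l * s)
        = l * Fpot ρ0 u0 y x s + (1 - l) * ∫ η in (0:ℝ)..y, η * ρ0 η := by
    intro x s l y hy
    unfold Fpot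
    rw [← intervalIntegral.integral_const_mul, ← intervalIntegral.integral_const_mul,
      ← intervalIntegral.integral_add ((hFint x s y hy).const_mul l)
        ((hEρint y hy).const_mul (1 - l))]
    exact intervalIntegral.integral_congr fun η _ => by ring
  have hGscale : ∀ x s l τ : ℝ, 0 ≤ τ →
      Gpot ρb ub τ (l * x) (l * s)
        = l * Gpot ρb ub τ x s + (1 - l) * ∫ η in (0:ℝ)..τ, (η * ub η) * (ρb η * ub η) := by
    intro x s l τ hτ
    unfold Gpot
    rw [← intervalIntegral.integral_const_mul, ← intervalIntegral.integral_const_mul,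
      ← intervalIntegral.integral_add ((hGint x s τ hτ).const_mul l)
        ((hEbint τ hτ).const_mul (1 - l))]
    exact intervalIntegral.integral_congr fun η _ => by ring
  -- scaling of zero min values
  have key0F : ∀ x s : ℝ, 0 ≤ x → 0 ≤ s → Fm x s = 0 →
      ∀ l : ℝ, 0 ≤ l → l ≤ 1 → Fm (l * x) (l * s) = 0 := by
    intro x s hx hs h0 l hl0 hl1
    have hlx : 0 ≤ l * x := mul_nonneg hl0 hx
    have hls : 0 ≤ l * s := mul_nonneg hl0 hs
    obtain ⟨y, hy, hyv⟩ := (hFm (l * x) (l * s) hlx hls).1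
    simp only at hyv
    have hge : 0 ≤ Fpot ρ0 u0 y (l * x) (l * s) := by
      rw [hFscale x s l y hy]
      have h1 : 0 ≤ Fpot ρ0 u0 y x s := by
        have := (hFm x s hx hs).2 y hy
        simp only at this; linarith [h0 ▸ this]
      have h2 := hEρ0 y hy
      have h3 : (0:ℝ) ≤ 1 - l := by linarith
      nlinarith
    have hle := hFle0 (l * x) (l * s) hlx hls
    linarith [hyv ▸ hge]
  have key0G : ∀ x s : ℝ, 0 ≤ x → 0 ≤ s → Gm x s = 0 →
      ∀ l : ℝ, 0 ≤ l → l ≤ 1 → Gm (l * x) (l * s) = 0 := by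
    intro x s hx hs h0 l hl0 hl1
    have hlx : 0 ≤ l * x := mul_nonneg hl0 hx
    have hls : 0 ≤ l * s := mul_nonneg hl0 hs
    obtain ⟨τ, hτ, hτv⟩ := (hGm (l * x) (l * s) hlx hls).1
    simp only at hτv
    have hge : 0 ≤ Gpot ρb ub τ (l * x) (l * s) := by
      rw [hGscale x s l τ hτ]
      have h1 : 0 ≤ Gpot ρb ub τ x s := by
        have := (hGm x s hx hs).2 τ hτ
        simp only at this; linarith [h0 ▸ this]
      have h2 := hEb0 τ hτ
      have h3 : (0:ℝ) ≤ 1 - l := by linarith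
      nlinarith
    have hle := hGle0 (l * x) (l * s) hlx hls
    linarith [hτv ▸ hge]
  -- the interface point with both values zero
  obtain ⟨x0, hx0mem⟩ := hne
  obtain ⟨ε, hε, hball⟩ := Metric.isOpen_iff.1 isOpen_interior x0 hx0mem
  have hmemS : ∀ z : ℝ, x0 - ε/2 ≤ z → z ≤ x0 + ε/2 → 0 ≤ z ∧ Fm z t = Gm z t := by
    intro z h1 h2
    have hzball : z ∈ Metric.ball x0 ε := by
      rw [Metric.mem_ball, Real.dist_eq, abs_lt]
      constructor <;> linarith
    have hz' : z ∈ {x : ℝ | 0 ≤ x ∧ Fm x t = Gm x t} := interior_subset (hball hzball)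
    exact hz'
  have hx0S := hmemS x0 (by linarith) (by linarith)
  have hx0 : 0 ≤ x0 := hx0S.1
  have haS := hmemS (x0 - ε/2) le_rfl (by linarith)
  have hbS := hmemS (x0 + ε/2) (by linarith) le_rfl
  have hFx0 : Fm x0 t = 0 := by
    by_contra hcne
    have hcneg : Fm x0 t < 0 := lt_of_le_of_ne (hFle0 x0 t hx0 ht.le) hcne
    -- all three points share the same value
    have hFb' : Fm (x0 + ε/2) t = Fm x0 t := by
      have h1 := hFmono t x0 (x0 + ε/2) ht.le hx0 (by linarith)
      have h2 := hGmono t x0 (x0 + ε/2) ht.le hx0 (by linarith)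
      rw [← hx0S.2, ← hbS.2] at h2
      linarith
    obtain ⟨y, hy0, hyv⟩ := (hFm x0 t hx0 ht.le).1
    simp only at hyv
    have hypos : 0 < y := by
      rcases eq_or_lt_of_le hy0 with h | h
      · exfalso; rw [← h] at hyv; simp [Fpot] at hyv; exact hcne hyv.symm
      · exact h
    have hdiff : Fpot ρ0 u0 y (x0 + ε/2) t = Fpot ρ0 u0 y x0 t - (ε/2) * ∫ η in (0:ℝ)..y, ρ0 η := by
      unfold Fpot
      rw [← intervalIntegral.integral_const_mul,
        ← intervalIntegral.integral_sub (hFint x0 t y hy0) ((hρ0int y hy0).const_mul (ε/2))]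
      exact intervalIntegral.integral_congr fun η _ => by ring
    have hρpos : 0 < ∫ η in (0:ℝ)..y, ρ0 η :=
      intervalIntegral.intervalIntegral_pos_of_pos_on (hρ0int y hy0) (fun η hη => hρ0pos η hη.1.le) hypos
    have hle := (hFm (x0 + ε/2) t hbS.1 ht.le).2 y hy0
    simp only at hle
    rw [hdiff, hyv] at hle
    have hprodpos : 0 < (ε/2) * ∫ η in (0:ℝ)..y, ρ0 η := mul_pos (by linarith) hρpos
    rw [hFb'] at hle
    linarith
  have hGx0 : Gm x0 t = 0 := by rw [← hx0S.2]; exact hFx0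
  -- any interface point (x,s) with 0 ≤ s ≤ t has value zero
  have valZero : ∀ x s : ℝ, 0 ≤ x → 0 ≤ s → s ≤ t → Fm x s = Gm x s → Fm x s = 0 := by
    intro x s hx hs hst heq
    have hl0 : 0 ≤ s / t := div_nonneg hs ht.le
    have hl1 : s / t ≤ 1 := (div_le_one ht).2 hst
    have hlt : (s / t) * t = s := by field_simp
    have hF0 : Fm ((s/t) * x0) s = 0 := by
      have := key0F x0 t hx0 ht.le hFx0 (s/t) hl0 hl1
      rwa [hlt] at this
    have hG0 : Gm ((s/t) * x0) s = 0 := by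
      have := key0G x0 t hx0 ht.le hGx0 (s/t) hl0 hl1
      rwa [hlt] at this
    have hx0' : 0 ≤ (s/t) * x0 := mul_nonneg hl0 hx0
    rcases le_total x ((s/t) * x0) with h | h
    · have h1 := hFmono s x ((s/t) * x0) hs hx h
      have h2 := hFle0 x s hx hs
      rw [hF0] at h1; linarith
    · have h1 := hGmono s ((s/t) * x0) x hs hx0' h
      have h2 := hGle0 x s hx hs
      rw [hG0] at h1; linarith
  constructor
  · -- part (4)
    intro t' ht'0 ht't
    have hl0 : 0 < t' / t := div_pos ht'0 ht
    have hl1 : t' / t ≤ 1 := le_of_lt ((div_lt_one ht).2 ht't)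
    have hlt : (t' / t) * t = t' := by field_simp
    refine ⟨(t'/t) * x0, ?_⟩
    have hsub : Ioo ((t'/t) * (x0 - ε/2)) ((t'/t) * (x0 + ε/2))
        ⊆ {x : ℝ | 0 ≤ x ∧ Fm x t' = Gm x t'} := by
      intro z hz
      set w := z / (t'/t) with hw
      have hlne : (t'/t) ≠ 0 := ne_of_gt hl0
      have hwz : (t'/t) * w = z := by rw [hw]; field_simp
      have hw1 : x0 - ε/2 < w := by
        rw [hw, lt_div_iff₀ hl0]; linarith [hz.1, mul_comm (t'/t) (x0 - ε/2)]
      have hw2 : w < x0 + ε/2 := by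
        rw [hw, div_lt_iff₀ hl0]; linarith [hz.2, mul_comm (t'/t) (x0 + ε/2)]
      obtain ⟨hw0, hweq⟩ := hmemS w hw1.le hw2.le
      have hFw : Fm w t = 0 := valZero w t hw0 ht.le le_rfl hweq
      have hGw : Gm w t = 0 := by rw [← hweq]; exact hFw
      have hF := key0F w t hw0 ht.le hFw (t'/t) hl0.le hl1
      have hG := key0G w t hw0 ht.le hGw (t'/t) hl0.le hl1
      rw [hlt, hwz] at hF hG
      exact ⟨by rw [← hwz]; exact mul_nonneg hl0.le hw0, by rw [hF, hG]⟩
    have hmem : (t'/t) * x0 ∈ Ioo ((t'/t) * (x0 - ε/2)) ((t'/t) * (x0 + ε/2)) :=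
      ⟨mul_lt_mul_of_pos_left (by linarith) hl0, mul_lt_mul_of_pos_left (by linarith) hl0⟩
    exact interior_maximal hsub isOpen_Ioo hmem
  · -- part (5)
    intro p hp a b ha0 hb0 hab
    obtain ⟨hp2, hpt, hp1, hpeq⟩ := hp
    have hb1 : b ≤ 1 := by linarith
    have hF0 : Fm p.1 p.2 = 0 := valZero p.1 p.2 hp1 hp2 hpt hpeq
    have hG0 : Gm p.1 p.2 = 0 := by rw [← hpeq]; exact hF0
    have hF := key0F p.1 p.2 hp1 hp2 hF0 b hb0 hb1
    have hG := key0G p.1 p.2 hp1 hp2 hG0 b hb0 hb1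
    have hpt' : a • ((0:ℝ), (0:ℝ)) + b • p = (b * p.1, b * p.2) := by
      simp [Prod.ext_iff, smul_eq_mul]
    rw [Set.mem_setOf_eq, hpt']
    refine ⟨mul_nonneg hb0 hp2, ?_, mul_nonneg hb0 hp1, by rw [hF, hG]⟩
    calc b * p.2 ≤ 1 * p.2 := mul_le_mul_of_nonneg_right hb1 hp2
      _ = p.2 := one_mul _
      _ ≤ t := hpt
end

section
/- If for some t′ > 0 the set I(t′) = {x ≥ 0 : F(x,t′) = G(x,t′)} is a nonempty singleton, then for every t > t′ the set I(t) = {x ≥ 0 : F(x,t) = G(x,t)} contains at most one point. -/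
open MeasureTheory Set Filter

lemma ii_bdd {f : ℝ → ℝ} (hf : Measurable f) {y C : ℝ} (hy : 0 ≤ y)
    (hC : ∀ η ∈ Set.Icc (0:ℝ) y, |f η| ≤ C) :
    IntervalIntegrable f MeasureTheory.volume 0 y := by
  rw [intervalIntegrable_iff_integrableOn_Ioc_of_le hy]
  apply MeasureTheory.Measure.integrableOn_of_bounded (M := C) measure_Ioc_lt_top.ne
    hf.aestronglyMeasurable
  filter_upwards [MeasureTheory.ae_restrict_mem measurableSet_Ioc] with η hη
  rw [Real.norm_eq_abs]
  exact hC η ⟨hη.1.le, hη.2⟩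

lemma intFaux (ρ0 u0 : ℝ → ℝ) (hρ0meas : Measurable ρ0) (hu0meas : Measurable u0)
    (hρ0pos : ∀ η, 0 ≤ η → 0 < ρ0 η)
    (hρ0loc : ∀ K : ℝ, ∃ M : ℝ, ∀ η ∈ Set.Icc (0:ℝ) K, ρ0 η ≤ M)
    (hu0bdd : ∃ M : ℝ, ∀ η, 0 ≤ η → |u0 η| ≤ M)
    (s x y : ℝ) (hy : 0 ≤ y) :
    IntervalIntegrable (fun η => (s * u0 η + η - x) * ρ0 η) MeasureTheory.volume 0 y := by
  obtain ⟨M0, hM0⟩ := hu0bdd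
  obtain ⟨Mρ, hMρ⟩ := hρ0loc y
  apply ii_bdd (C := (|s| * M0 + y + |x|) * Mρ) ?_ hy
  · intro η hη
    have h1 : 0 ≤ η := hη.1
    have h2 : η ≤ y := hη.2
    have hρ := hρ0pos η h1
    have hρM := hMρ η hη
    have hu := hM0 η h1
    rw [abs_mul, abs_of_pos hρ]
    have h3 : |s * u0 η + η - x| ≤ |s| * M0 + y + |x| := by
      have t1 : |s * u0 η + η - x| ≤ |s * u0 η + η| + |x| := by
        rw [sub_eq_add_neg]
        exact (abs_add_le _ _).trans (by rw [abs_neg])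
      have t2 : |s * u0 η + η| ≤ |s * u0 η| + |η| := abs_add_le _ _
      have t3 : |s * u0 η| ≤ |s| * M0 := by
        rw [abs_mul]; exact mul_le_mul_of_nonneg_left hu (abs_nonneg s)
      have t4 : |η| ≤ y := by rw [abs_of_nonneg h1]; exact h2
      linarith
    exact mul_le_mul h3 hρM hρ.le ((abs_nonneg _).trans h3)
  · exact ((hu0meas.const_mul s |>.add measurable_id |>.sub measurable_const)).mul hρ0meas

lemma intGaux (ρb ub : ℝ → ℝ) (hρbmeas : Measurable ρb) (hubmeas : Measurable ub)
    (hρbpos : ∀ η, 0 ≤ η → 0 < ρb η)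
    (hubpos : ∀ η, 0 ≤ η → 0 < ub η)
    (hρbloc : ∀ K : ℝ, ∃ M : ℝ, ∀ η ∈ Set.Icc (0:ℝ) K, ρb η ≤ M)
    (hubbdd : ∃ M : ℝ, ∀ η, 0 ≤ η → |ub η| ≤ M)
    (s x y : ℝ) (hy : 0 ≤ y) :
    IntervalIntegrable (fun η => (x - ub η * (s - η)) * (ρb η * ub η))
      MeasureTheory.volume 0 y := by
  obtain ⟨Mu, hMu⟩ := hubbdd
  obtain ⟨Mρ, hMρ⟩ := hρbloc y
  have hMu0 : 0 ≤ Mu := (abs_nonneg _).trans (hMu 0 le_rfl)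
  have hMρ0 : 0 ≤ Mρ := (hρbpos 0 le_rfl).le.trans (hMρ 0 ⟨le_rfl, hy⟩)
  apply ii_bdd (C := (|x| + Mu * (|s| + y)) * (Mρ * Mu)) ?_ hy
  · intro η hη
    have h1 : 0 ≤ η := hη.1
    have h2 : η ≤ y := hη.2
    have hρ := hρbpos η h1
    have hub := hubpos η h1
    have hρM := hMρ η hη
    have huM := hMu η h1
    rw [abs_mul]
    have h3 : |x - ub η * (s - η)| ≤ |x| + Mu * (|s| + y) := by
      have t1 : |x - ub η * (s - η)| ≤ |x| + |ub η * (s - η)| := by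
        rw [sub_eq_add_neg]
        exact (abs_add_le _ _).trans (by rw [abs_neg])
      have t2 : |ub η * (s - η)| ≤ Mu * (|s| + y) := by
        rw [abs_mul]
        apply mul_le_mul huM ?_ (abs_nonneg _) hMu0
        have : |s - η| ≤ |s| + |η| := by
          rw [sub_eq_add_neg]
          exact (abs_add_le _ _).trans (by rw [abs_neg])
        have t4 : |η| ≤ y := by rw [abs_of_nonneg h1]; exact h2
        linarith
      linarith
    have h4 : |ρb η * ub η| ≤ Mρ * Mu := by
      rw [abs_mul, abs_of_pos hρ]
      exact mul_le_mul hρM huM (abs_nonneg _) hMρ0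
    exact mul_le_mul h3 h4 (abs_nonneg _) ((abs_nonneg _).trans h3)
  · exact ((measurable_const.sub (hubmeas.mul (measurable_const.sub measurable_id)))).mul
      (hρbmeas.mul hubmeas)

lemma intRho (ρ0 : ℝ → ℝ) (hρ0meas : Measurable ρ0)
    (hρ0pos : ∀ η, 0 ≤ η → 0 < ρ0 η)
    (hρ0loc : ∀ K : ℝ, ∃ M : ℝ, ∀ η ∈ Set.Icc (0:ℝ) K, ρ0 η ≤ M)
    (y : ℝ) (hy : 0 ≤ y) :
    IntervalIntegrable ρ0 MeasureTheory.volume 0 y := by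
  obtain ⟨Mρ, hMρ⟩ := hρ0loc y
  apply ii_bdd (C := Mρ) hρ0meas hy
  intro η hη
  rw [abs_of_pos (hρ0pos η hη.1)]
  exact hMρ η hη

theorem stmt9
    (ρ0 u0 ρb ub : ℝ → ℝ)
    (hρ0meas : Measurable ρ0) (hu0meas : Measurable u0)
    (hρbmeas : Measurable ρb) (hubmeas : Measurable ub)
    (hρ0pos : ∀ η, 0 ≤ η → 0 < ρ0 η)
    (hρbpos : ∀ η, 0 ≤ η → 0 < ρb η)
    (hubpos : ∀ η, 0 ≤ η → 0 < ub η)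
    (hρ0loc : ∀ K : ℝ, ∃ M : ℝ, ∀ η ∈ Set.Icc (0:ℝ) K, ρ0 η ≤ M)
    (hρbloc : ∀ K : ℝ, ∃ M : ℝ, ∀ η ∈ Set.Icc (0:ℝ) K, ρb η ≤ M)
    (hu0bdd : ∃ M : ℝ, ∀ η, 0 ≤ η → |u0 η| ≤ M)
    (hubbdd : ∃ M : ℝ, ∀ η, 0 ≤ η → |ub η| ≤ M)
    (Fm Gm : ℝ → ℝ → ℝ)
    (hFm : ∀ x t, 0 ≤ x → 0 ≤ t → IsMinValue (fun y => Fpot ρ0 u0 y x t) (Fm x t))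
    (hGm : ∀ x t, 0 ≤ x → 0 ≤ t → IsMinValue (fun τ => Gpot ρb ub τ x t) (Gm x t))
    (t' : ℝ) (ht' : 0 < t')
    (hsing : ∃ x₀ : ℝ, {x : ℝ | 0 ≤ x ∧ Fm x t' = Gm x t'} = {x₀}) :
    ∀ t, t' < t → {x : ℝ | 0 ≤ x ∧ Fm x t = Gm x t}.Subsingleton := by
  intro t htt
  have ht0 : (0:ℝ) < t := ht'.trans htt
  obtain ⟨x₀, hx₀⟩ := hsing
  have intF : ∀ s x y : ℝ, 0 ≤ y →
      IntervalIntegrable (fun η => (s * u0 η + η - x) * ρ0 η) MeasureTheory.volume 0 y :=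
    intFaux ρ0 u0 hρ0meas hu0meas hρ0pos hρ0loc hu0bdd
  have intG : ∀ s x y : ℝ, 0 ≤ y →
      IntervalIntegrable (fun η => (x - ub η * (s - η)) * (ρb η * ub η))
        MeasureTheory.volume 0 y :=
    intGaux ρb ub hρbmeas hubmeas hρbpos hubpos hρbloc hubbdd
  suffices key : ∀ x1 x2 : ℝ, 0 ≤ x1 → x1 < x2 → Fm x1 t = Gm x1 t → Fm x2 t = Gm x2 t → False by
    intro a ha b hb
    by_contra hne
    rcases lt_or_gt_of_ne hne with h | h
    · exact key a b ha.1 h ha.2 hb.2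
    · exact key b a hb.1 h hb.2 ha.2
  intro x1 x2 hx1 hlt hI1 hI2
  have hx2 : 0 ≤ x2 := hx1.trans hlt.le
  have hFmin1 := hFm x1 t hx1 ht0.le
  have hFmin2 := hFm x2 t hx2 ht0.le
  have hGmin1 := hGm x1 t hx1 ht0.le
  have hGmin2 := hGm x2 t hx2 ht0.le
  -- Fm x1 t ≤ 0
  have hFle : Fm x1 t ≤ 0 := by
    have h := hFmin1.2 0 le_rfl
    have h0 : Fpot ρ0 u0 0 x1 t = 0 := intervalIntegral.integral_same
    calc Fm x1 t ≤ Fpot ρ0 u0 0 x1 t := h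
    _ = 0 := h0
  -- minimizer for x1
  obtain ⟨a1, ha1, hfa1⟩ := hFmin1.1
  have hfa1' : Fpot ρ0 u0 a1 x1 t = Fm x1 t := hfa1
  -- Fm monotone : Fm x2 t ≤ Fm x1 t
  have hmonF : Fm x2 t ≤ Fm x1 t := by
    have h1 : Fm x2 t ≤ Fpot ρ0 u0 a1 x2 t := hFmin2.2 a1 ha1
    have h2 : Fpot ρ0 u0 a1 x2 t ≤ Fpot ρ0 u0 a1 x1 t := by
      apply intervalIntegral.integral_mono_on ha1 (intF t x2 a1 ha1) (intF t x1 a1 ha1)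
      intro η hη
      have hρ := (hρ0pos η hη.1).le
      nlinarith [mul_nonneg (sub_nonneg.2 hlt.le) hρ]
    linarith
  -- Gm monotone : Gm x1 t ≤ Gm x2 t
  obtain ⟨b2, hb2, hgb2⟩ := hGmin2.1
  have hgb2' : Gpot ρb ub b2 x2 t = Gm x2 t := hgb2
  have hmonG : Gm x1 t ≤ Gm x2 t := by
    have h1 : Gm x1 t ≤ Gpot ρb ub b2 x1 t := hGmin1.2 b2 hb2
    have h2 : Gpot ρb ub b2 x1 t ≤ Gpot ρb ub b2 x2 t := by
      apply intervalIntegral.integral_mono_on hb2 (intG t x1 b2 hb2) (intG t x2 b2 hb2)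
      intro η hη
      have hρ := (hρbpos η hη.1).le
      have hu := (hubpos η hη.1).le
      nlinarith [mul_nonneg (sub_nonneg.2 hlt.le) (mul_nonneg hρ hu)]
    linarith
  have heq2 : Fm x2 t = Fm x1 t := by linarith
  have heqG : Gm x1 t = Fm x1 t := by linarith
  -- all values are zero
  have hzero : Fm x1 t = 0 := by
    by_contra hne0
    have hcneg : Fm x1 t < 0 := lt_of_le_of_ne hFle hne0
    have ha1pos : 0 < a1 := by
      rcases ha1.eq_or_lt with h | h
      · exfalso
        have h0 : Fpot ρ0 u0 a1 x1 t = 0 := by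
          rw [← h]; exact intervalIntegral.integral_same
        linarith
      · exact h
    have hpos : 0 < ∫ η in (0:ℝ)..a1, ρ0 η := by
      exact intervalIntegral.intervalIntegral_pos_of_pos_on
        (intRho ρ0 hρ0meas hρ0pos hρ0loc a1 ha1) (fun η hη => hρ0pos η hη.1.le) ha1pos
    have hsub : Fpot ρ0 u0 a1 x1 t - Fpot ρ0 u0 a1 x2 t
        = (x2 - x1) * ∫ η in (0:ℝ)..a1, ρ0 η := by
      rw [Fpot, Fpot, ← intervalIntegral.integral_sub (intF t x1 a1 ha1) (intF t x2 a1 ha1),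
        ← intervalIntegral.integral_const_mul]
      apply intervalIntegral.integral_congr
      intro η hη
      ring
    have h1 : Fm x2 t ≤ Fpot ρ0 u0 a1 x2 t := hFmin2.2 a1 ha1
    nlinarith [mul_pos (sub_pos.2 hlt) hpos]
  have hF2z : Fm x2 t = 0 := by linarith
  have hG1z : Gm x1 t = 0 := by linarith
  -- propagation back to time t'
  set r := t' / t with hrdef
  have hr0 : 0 < r := div_pos ht' ht0
  have hr1 : r ≤ 1 := (div_le_one ht0).2 htt.le
  have hrt : r * t = t' := div_mul_cancel₀ t' ht0.ne'
  have hFprop : ∀ x, 0 ≤ x → x ≤ r * x2 → Fm x t' = 0 := by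
    intro x hx hxle
    have hmv := hFm x t' hx ht'.le
    have hnn : ∀ y, 0 ≤ y → 0 ≤ Fpot ρ0 u0 y x t' := by
      intro y hy
      have h1 : Fm x2 t ≤ Fpot ρ0 u0 y x2 t := hFmin2.2 y hy
      rw [hF2z] at h1
      have h2 : ∫ η in (0:ℝ)..y, r * ((t * u0 η + η - x2) * ρ0 η)
          ≤ Fpot ρ0 u0 y x t' := by
        rw [Fpot]
        apply intervalIntegral.integral_mono_on hy ((intF t x2 y hy).const_mul r)
          (intF t' x y hy)
        intro η hη
        have hρ := (hρ0pos η hη.1).le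
        have hη0 := hη.1
        rw [← hrt]
        nlinarith [mul_nonneg hρ (mul_nonneg (sub_nonneg.2 hr1) hη0),
          mul_nonneg hρ (sub_nonneg.2 hxle)]
      have h3 : ∫ η in (0:ℝ)..y, r * ((t * u0 η + η - x2) * ρ0 η)
          = r * Fpot ρ0 u0 y x2 t := by
        rw [Fpot, intervalIntegral.integral_const_mul]
      have h4 : 0 ≤ r * Fpot ρ0 u0 y x2 t := mul_nonneg hr0.le h1
      linarith
    obtain ⟨a, ha0, hfa⟩ := hmv.1
    have hfa' : Fpot ρ0 u0 a x t' = Fm x t' := hfa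
    have hle0 : Fm x t' ≤ 0 := by
      have h := hmv.2 0 le_rfl
      have h0 : Fpot ρ0 u0 0 x t' = 0 := intervalIntegral.integral_same
      calc Fm x t' ≤ Fpot ρ0 u0 0 x t' := h
      _ = 0 := h0
    have := hnn a ha0
    linarith
  have hGprop : ∀ x, 0 ≤ x → r * x1 ≤ x → Gm x t' = 0 := by
    intro x hx hxge
    have hmv := hGm x t' hx ht'.le
    have hnn : ∀ τ, 0 ≤ τ → 0 ≤ Gpot ρb ub τ x t' := by
      intro τ hτ
      have h1 : Gm x1 t ≤ Gpot ρb ub τ x1 t := hGmin1.2 τ hτ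
      rw [hG1z] at h1
      have h2 : ∫ η in (0:ℝ)..τ, r * ((x1 - ub η * (t - η)) * (ρb η * ub η))
          ≤ Gpot ρb ub τ x t' := by
        rw [Gpot]
        apply intervalIntegral.integral_mono_on hτ ((intG t x1 τ hτ).const_mul r)
          (intG t' x τ hτ)
        intro η hη
        have hρ := (hρbpos η hη.1).le
        have hu := (hubpos η hη.1).le
        have hη0 := hη.1
        rw [← hrt]
        nlinarith [mul_nonneg (mul_nonneg hρ hu) (sub_nonneg.2 hxge),
          mul_nonneg (mul_nonneg (mul_nonneg hρ hu) hu)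
            (mul_nonneg hη0 (sub_nonneg.2 hr1))]
      have h3 : ∫ η in (0:ℝ)..τ, r * ((x1 - ub η * (t - η)) * (ρb η * ub η))
          = r * Gpot ρb ub τ x1 t := by
        rw [Gpot, intervalIntegral.integral_const_mul]
      have h4 : 0 ≤ r * Gpot ρb ub τ x1 t := mul_nonneg hr0.le h1
      linarith
    obtain ⟨a, ha0, hfa⟩ := hmv.1
    have hfa' : Gpot ρb ub a x t' = Gm x t' := hfa
    have hle0 : Gm x t' ≤ 0 := by
      have h := hmv.2 0 le_rfl
      have h0 : Gpot ρb ub 0 x t' = 0 := intervalIntegral.integral_same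
      calc Gm x t' ≤ Gpot ρb ub 0 x t' := h
      _ = 0 := h0
    have := hnn a ha0
    linarith
  -- two points in I(t')
  have hm1 : r * x1 ∈ {x : ℝ | 0 ≤ x ∧ Fm x t' = Gm x t'} := by
    refine ⟨mul_nonneg hr0.le hx1, ?_⟩
    rw [hFprop (r * x1) (mul_nonneg hr0.le hx1)
        (mul_le_mul_of_nonneg_left hlt.le hr0.le),
      hGprop (r * x1) (mul_nonneg hr0.le hx1) le_rfl]
  have hm2 : r * x2 ∈ {x : ℝ | 0 ≤ x ∧ Fm x t' = Gm x t'} := by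
    refine ⟨mul_nonneg hr0.le hx2, ?_⟩
    rw [hFprop (r * x2) (mul_nonneg hr0.le hx2) le_rfl,
      hGprop (r * x2) (mul_nonneg hr0.le hx2)
        (mul_le_mul_of_nonneg_left hlt.le hr0.le)]
  rw [hx₀] at hm1 hm2
  have : r * x1 = r * x2 := by
    rw [Set.mem_singleton_iff] at hm1 hm2
    rw [hm1, hm2]
  have := mul_left_cancel₀ hr0.ne' this
  exact absurd this hlt.ne
end

section
/- Let t > 0 be fixed and let x₁, x₂ > 0 with x₁ ≠ x₂. Then the characteristic triangles Δ(x₁,t) and Δ(x₂,t) do not intersect in the open quadrant (0,∞) × (0,∞); that is, every point of Δ(x₁,t) ∩ Δ(x₂,t) lies on one of the coordinate axes. -/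
open MeasureTheory Set Filter

set_option maxHeartbeats 2000000

private lemma convex_lin (c1 c2 c3 : ℝ) : Convex ℝ {q : ℝ × ℝ | c1 * q.1 + c2 * q.2 ≤ c3} := by
  have hlin : IsLinearMap ℝ (fun q : ℝ × ℝ => c1 * q.1 + c2 * q.2) :=
    ⟨fun p q => by simp only [Prod.fst_add, Prod.snd_add]; ring,
     fun r p => by simp only [Prod.smul_fst, Prod.smul_snd, smul_eq_mul]; ring⟩
  exact convex_halfSpace_le hlin c3

private lemma hull3_le {v1 v2 v3 : ℝ × ℝ} {c1 c2 c3 : ℝ}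
    (h1 : c1 * v1.1 + c2 * v1.2 ≤ c3) (h2 : c1 * v2.1 + c2 * v2.2 ≤ c3)
    (h3 : c1 * v3.1 + c2 * v3.2 ≤ c3) {q : ℝ × ℝ}
    (hq : q ∈ convexHull ℝ ({v1, v2, v3} : Set (ℝ × ℝ))) : c1 * q.1 + c2 * q.2 ≤ c3 := by
  refine convexHull_min ?_ (convex_lin c1 c2 c3) hq
  intro v hv
  simp only [Set.mem_insert_iff, Set.mem_singleton_iff] at hv
  rcases hv with rfl | rfl | rfl
  exacts [h1, h2, h3]

private lemma hull4_le {v1 v2 v3 v4 : ℝ × ℝ} {c1 c2 c3 : ℝ}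
    (h1 : c1 * v1.1 + c2 * v1.2 ≤ c3) (h2 : c1 * v2.1 + c2 * v2.2 ≤ c3)
    (h3 : c1 * v3.1 + c2 * v3.2 ≤ c3) (h4 : c1 * v4.1 + c2 * v4.2 ≤ c3) {q : ℝ × ℝ}
    (hq : q ∈ convexHull ℝ ({v1, v2, v3, v4} : Set (ℝ × ℝ))) : c1 * q.1 + c2 * q.2 ≤ c3 := by
  refine convexHull_min ?_ (convex_lin c1 c2 c3) hq
  intro v hv
  simp only [Set.mem_insert_iff, Set.mem_singleton_iff] at hv
  rcases hv with rfl | rfl | rfl | rfl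
  exacts [h1, h2, h3, h4]

private lemma hull3_nonneg {v1 v2 v3 : ℝ × ℝ} (h1 : 0 ≤ v1.1 ∧ 0 ≤ v1.2)
    (h2 : 0 ≤ v2.1 ∧ 0 ≤ v2.2) (h3 : 0 ≤ v3.1 ∧ 0 ≤ v3.2) {q : ℝ × ℝ}
    (hq : q ∈ convexHull ℝ ({v1, v2, v3} : Set (ℝ × ℝ))) : 0 ≤ q.1 ∧ 0 ≤ q.2 := by
  constructor
  · have := hull3_le (c1 := -1) (c2 := 0) (c3 := 0) (by linarith [h1.1]) (by linarith [h2.1])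
      (by linarith [h3.1]) hq
    linarith
  · have := hull3_le (c1 := 0) (c2 := -1) (c3 := 0) (by linarith [h1.2]) (by linarith [h2.2])
      (by linarith [h3.2]) hq
    linarith

private lemma hull4_nonneg {v1 v2 v3 v4 : ℝ × ℝ} (h1 : 0 ≤ v1.1 ∧ 0 ≤ v1.2)
    (h2 : 0 ≤ v2.1 ∧ 0 ≤ v2.2) (h3 : 0 ≤ v3.1 ∧ 0 ≤ v3.2) (h4 : 0 ≤ v4.1 ∧ 0 ≤ v4.2)
    {q : ℝ × ℝ} (hq : q ∈ convexHull ℝ ({v1, v2, v3, v4} : Set (ℝ × ℝ))) :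
    0 ≤ q.1 ∧ 0 ≤ q.2 := by
  constructor
  · have := hull4_le (c1 := -1) (c2 := 0) (c3 := 0) (by linarith [h1.1]) (by linarith [h2.1])
      (by linarith [h3.1]) (by linarith [h4.1]) hq
    linarith
  · have := hull4_le (c1 := 0) (c2 := -1) (c3 := 0) (by linarith [h1.2]) (by linarith [h2.2])
      (by linarith [h3.2]) (by linarith [h4.2]) hq
    linarith

private lemma intble_bdd {f : ℝ → ℝ} (hf : Measurable f) {c d : ℝ} (M : ℝ) (hcd : c ≤ d)
    (hM : ∀ x ∈ Set.Ioc c d, |f x| ≤ M) : IntervalIntegrable f MeasureTheory.volume c d := by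
  rw [intervalIntegrable_iff_integrableOn_Ioc_of_le hcd]
  have hc : MeasureTheory.IntegrableOn (fun _ => M) (Set.Ioc c d) MeasureTheory.volume :=
    MeasureTheory.integrableOn_const measure_Ioc_lt_top.ne
  refine hc.mono' hf.aestronglyMeasurable.restrict ?_
  rw [MeasureTheory.ae_restrict_iff' measurableSet_Ioc]
  exact Filter.Eventually.of_forall fun x hx => (Real.norm_eq_abs _) ▸ hM x hx


open Classical in
/-- The characteristic triangle with apex `(x, t)`. -/
noncomputable def charTriangle (Fm Gm ys yS τs τS : ℝ → ℝ → ℝ) (x t : ℝ) : Set (ℝ × ℝ) :=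
  if x = 0 ∧ Fm x t < Gm x t then
    convexHull ℝ {((0:ℝ), t), ((0:ℝ), (0:ℝ)), (yS 0 t, (0:ℝ))}
  else if Fm x t < Gm x t then
    convexHull ℝ {(x, t), (ys x t, (0:ℝ)), (yS x t, (0:ℝ))}
  else if Gm x t < Fm x t then
    convexHull ℝ {(x, t), ((0:ℝ), τs x t), ((0:ℝ), τS x t)}
  else
    convexHull ℝ {(x, t), (yS x t, (0:ℝ)), ((0:ℝ), τS x t), ((0:ℝ), (0:ℝ))}

theorem stmt10
    (ρ0 u0 ρb ub : ℝ → ℝ)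
    (hρ0meas : Measurable ρ0) (hu0meas : Measurable u0)
    (hρbmeas : Measurable ρb) (hubmeas : Measurable ub)
    (hρ0pos : ∀ η, 0 ≤ η → 0 < ρ0 η)
    (hρbpos : ∀ η, 0 ≤ η → 0 < ρb η)
    (hubpos : ∀ η, 0 ≤ η → 0 < ub η)
    (hρ0loc : ∀ K : ℝ, ∃ M : ℝ, ∀ η ∈ Set.Icc (0:ℝ) K, ρ0 η ≤ M)
    (hρbloc : ∀ K : ℝ, ∃ M : ℝ, ∀ η ∈ Set.Icc (0:ℝ) K, ρb η ≤ M)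
    (hu0bdd : ∃ M : ℝ, ∀ η, 0 ≤ η → |u0 η| ≤ M)
    (hubbdd : ∃ M : ℝ, ∀ η, 0 ≤ η → |ub η| ≤ M)
    (Fm Gm : ℝ → ℝ → ℝ)
    (hFm : ∀ x t, 0 ≤ x → 0 ≤ t → IsMinValue (fun y => Fpot ρ0 u0 y x t) (Fm x t))
    (hGm : ∀ x t, 0 ≤ x → 0 ≤ t → IsMinValue (fun τ => Gpot ρb ub τ x t) (Gm x t))
    (ys yS τs τS : ℝ → ℝ → ℝ)
    (hys : ∀ x t, 0 ≤ x → 0 ≤ t → SmallestMinimizer (fun y => Fpot ρ0 u0 y x t) (ys x t))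
    (hyS : ∀ x t, 0 ≤ x → 0 ≤ t → LargestMinimizer (fun y => Fpot ρ0 u0 y x t) (yS x t))
    (hτs : ∀ x t, 0 ≤ x → 0 ≤ t → SmallestMinimizer (fun τ => Gpot ρb ub τ x t) (τs x t))
    (hτS : ∀ x t, 0 ≤ x → 0 ≤ t → LargestMinimizer (fun τ => Gpot ρb ub τ x t) (τS x t))
    (t x₁ x₂ : ℝ) (ht : 0 < t) (hx₁ : 0 < x₁) (hx₂ : 0 < x₂) (hne : x₁ ≠ x₂) :
    ∀ p ∈ charTriangle Fm Gm ys yS τs τS x₁ t ∩ charTriangle Fm Gm ys yS τs τS x₂ t,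
      p.1 = 0 ∨ p.2 = 0 := by
  obtain ⟨Mu, hMu⟩ := hu0bdd
  obtain ⟨Mb, hMb⟩ := hubbdd
  -- basic integrability facts
  have hρ0int : ∀ c d : ℝ, 0 ≤ c → c ≤ d → IntervalIntegrable ρ0 volume c d := by
    intro c d hc hcd
    obtain ⟨M, hM⟩ := hρ0loc d
    refine intble_bdd hρ0meas M hcd fun x hx => ?_
    rw [abs_of_pos (hρ0pos x (hc.trans hx.1.le))]
    exact hM x ⟨hc.trans hx.1.le, hx.2⟩
  have hCint : ∀ c d : ℝ, 0 ≤ c → c ≤ d →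
      IntervalIntegrable (fun η => ρb η * ub η) volume c d := by
    intro c d hc hcd
    obtain ⟨M, hM⟩ := hρbloc d
    refine intble_bdd (hρbmeas.mul hubmeas) (M * Mb) hcd fun x hx => ?_
    have h0x : (0:ℝ) ≤ x := hc.trans hx.1.le
    have h1 : ρb x ≤ M := hM x ⟨h0x, hx.2⟩
    have h2 : ub x ≤ Mb := (le_abs_self _).trans (hMb x h0x)
    have h3 : 0 < ρb x := hρbpos x h0x
    have h4 : 0 < ub x := hubpos x h0x
    rw [Pi.mul_apply, abs_of_pos (mul_pos h3 h4)]
    exact mul_le_mul h1 h2 h4.le (h3.trans_le h1).le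
  have hFint : ∀ x y : ℝ, 0 ≤ y →
      IntervalIntegrable (fun η => (t * u0 η + η - x) * ρ0 η) volume 0 y := by
    intro x y hy
    obtain ⟨M, hM⟩ := hρ0loc y
    refine intble_bdd (((hu0meas.const_mul t).add measurable_id |>.sub measurable_const).mul
      hρ0meas) ((|t| * Mu + y + |x|) * M) hy fun η hη => ?_
    have h0η : (0:ℝ) ≤ η := hη.1.le
    have hb1 : |t * u0 η + η - x| ≤ |t| * Mu + y + |x| := by
      have h2 : |t * u0 η| ≤ |t| * Mu := by
        rw [abs_mul]
        exact mul_le_mul_of_nonneg_left (hMu η h0η) (abs_nonneg t)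
      have h3 : |η| ≤ y := by rw [abs_of_nonneg h0η]; exact hη.2
      calc |t * u0 η + η - x| ≤ |t * u0 η + η| + |x| := abs_sub _ _
        _ ≤ (|t * u0 η| + |η|) + |x| := add_le_add_left (abs_add_le _ _) _
        _ ≤ |t| * Mu + y + |x| := by linarith
    have hb2 : |ρ0 η| ≤ M := by
      rw [abs_of_pos (hρ0pos η h0η)]; exact hM η ⟨h0η, hη.2⟩
    rw [Pi.mul_apply, abs_mul]
    exact mul_le_mul hb1 hb2 (abs_nonneg _) ((abs_nonneg _).trans hb1)
  have hGint : ∀ x c d : ℝ, 0 ≤ c → c ≤ d →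
      IntervalIntegrable (fun η => (x - ub η * (t - η)) * (ρb η * ub η)) volume c d := by
    intro x c d hc hcd
    obtain ⟨M, hM⟩ := hρbloc d
    refine intble_bdd ((measurable_const.sub (hubmeas.mul
      (measurable_const.sub measurable_id))).mul (hρbmeas.mul hubmeas))
      ((|x| + Mb * (|t| + d)) * (M * Mb)) hcd fun η hη => ?_
    have h0η : (0:ℝ) ≤ η := hc.trans hη.1.le
    have hb1 : |x - ub η * (t - η)| ≤ |x| + Mb * (|t| + d) := by
      have h2 : |ub η * (t - η)| ≤ Mb * (|t| + d) := by
        rw [abs_mul]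
        refine mul_le_mul (hMb η h0η) ?_ (abs_nonneg _) ((abs_nonneg _).trans (hMb η h0η))
        calc |t - η| ≤ |t| + |η| := abs_sub _ _
          _ ≤ |t| + d := by rw [abs_of_nonneg h0η]; linarith [hη.2]
      calc |x - ub η * (t - η)| ≤ |x| + |ub η * (t - η)| := abs_sub _ _
        _ ≤ |x| + Mb * (|t| + d) := by linarith
    have hb2 : |ρb η * ub η| ≤ M * Mb := by
      have h1 : ρb η ≤ M := hM η ⟨h0η, hη.2⟩
      have h2 : ub η ≤ Mb := (le_abs_self _).trans (hMb η h0η)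
      have h3 : 0 < ρb η := hρbpos η h0η
      have h4 : 0 < ub η := hubpos η h0η
      rw [abs_of_pos (mul_pos h3 h4)]
      exact mul_le_mul h1 h2 h4.le (h3.trans_le h1).le
    rw [Pi.mul_apply, abs_mul]
    exact mul_le_mul hb1 hb2 (abs_nonneg _) ((abs_nonneg _).trans hb1)
  -- positivity and monotonicity of the primitives
  have hBpos : ∀ c d : ℝ, 0 ≤ c → c < d → 0 < ∫ η in c..d, ρ0 η := fun c d hc hcd =>
    intervalIntegral.intervalIntegral_pos_of_pos_on (hρ0int c d hc hcd.le)
      (fun x hx => hρ0pos x (hc.trans hx.1.le)) hcd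
  have hCpos : ∀ c d : ℝ, 0 ≤ c → c < d → 0 < ∫ η in c..d, ρb η * ub η := fun c d hc hcd =>
    intervalIntegral.intervalIntegral_pos_of_pos_on (hCint c d hc hcd.le)
      (fun x hx => mul_pos (hρbpos x (hc.trans hx.1.le)) (hubpos x (hc.trans hx.1.le))) hcd
  have hBnonneg : ∀ y : ℝ, 0 ≤ y → 0 ≤ ∫ η in (0:ℝ)..y, ρ0 η := by
    intro y hy
    rcases eq_or_lt_of_le hy with h | h
    · rw [← h, intervalIntegral.integral_same]
    · exact (hBpos 0 y le_rfl h).le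
  have hCnonneg : ∀ y : ℝ, 0 ≤ y → 0 ≤ ∫ η in (0:ℝ)..y, ρb η * ub η := by
    intro y hy
    rcases eq_or_lt_of_le hy with h | h
    · rw [← h, intervalIntegral.integral_same]
    · exact (hCpos 0 y le_rfl h).le
  have hBmono : ∀ y1 y2 : ℝ, 0 ≤ y1 → y1 < y2 →
      (∫ η in (0:ℝ)..y1, ρ0 η) < ∫ η in (0:ℝ)..y2, ρ0 η := by
    intro y1 y2 h1 h12
    rw [← intervalIntegral.integral_add_adjacent_intervals (hρ0int 0 y1 le_rfl h1)
      (hρ0int y1 y2 h1 h12.le)]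
    linarith [hBpos y1 y2 h1 h12]
  have hCmono : ∀ y1 y2 : ℝ, 0 ≤ y1 → y1 < y2 →
      (∫ η in (0:ℝ)..y1, ρb η * ub η) < ∫ η in (0:ℝ)..y2, ρb η * ub η := by
    intro y1 y2 h1 h12
    rw [← intervalIntegral.integral_add_adjacent_intervals (hCint 0 y1 le_rfl h1)
      (hCint y1 y2 h1 h12.le)]
    linarith [hCpos y1 y2 h1 h12]
  -- linearity in x
  have hFlin : ∀ x x' y : ℝ, 0 ≤ y →
      Fpot ρ0 u0 y x' t = Fpot ρ0 u0 y x t + (x - x') * ∫ η in (0:ℝ)..y, ρ0 η := by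
    intro x x' y hy
    have key : (fun η => (t * u0 η + η - x') * ρ0 η) =
        fun η => (t * u0 η + η - x) * ρ0 η + (x - x') * ρ0 η := by
      funext η; ring
    calc Fpot ρ0 u0 y x' t
        = ∫ η in (0:ℝ)..y, ((t * u0 η + η - x) * ρ0 η + (x - x') * ρ0 η) := by
          rw [Fpot, key]
      _ = (∫ η in (0:ℝ)..y, (t * u0 η + η - x) * ρ0 η)
            + ∫ η in (0:ℝ)..y, (x - x') * ρ0 η :=
          intervalIntegral.integral_add (hFint x y hy) ((hρ0int 0 y le_rfl hy).const_mul _)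
      _ = Fpot ρ0 u0 y x t + (x - x') * ∫ η in (0:ℝ)..y, ρ0 η := by
          rw [Fpot, intervalIntegral.integral_const_mul]
  have hGlin : ∀ x x' τ : ℝ, 0 ≤ τ →
      Gpot ρb ub τ x' t = Gpot ρb ub τ x t + (x' - x) * ∫ η in (0:ℝ)..τ, ρb η * ub η := by
    intro x x' τ hτ
    have key : (fun η => (x' - ub η * (t - η)) * (ρb η * ub η)) =
        fun η => (x - ub η * (t - η)) * (ρb η * ub η) + (x' - x) * (ρb η * ub η) := by
      funext η; ring
    calc Gpot ρb ub τ x' t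
        = ∫ η in (0:ℝ)..τ,
            ((x - ub η * (t - η)) * (ρb η * ub η) + (x' - x) * (ρb η * ub η)) := by
          rw [Gpot, key]
      _ = (∫ η in (0:ℝ)..τ, (x - ub η * (t - η)) * (ρb η * ub η))
            + ∫ η in (0:ℝ)..τ, (x' - x) * (ρb η * ub η) :=
          intervalIntegral.integral_add (hGint x 0 τ le_rfl hτ)
            ((hCint 0 τ le_rfl hτ).const_mul _)
      _ = Gpot ρb ub τ x t + (x' - x) * ∫ η in (0:ℝ)..τ, ρb η * ub η := by
          rw [Gpot, intervalIntegral.integral_const_mul]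
  -- minimum values are attained at minimizers
  have hFval : ∀ x y : ℝ, 0 ≤ x → MinimizesOn (fun y => Fpot ρ0 u0 y x t) y →
      Fpot ρ0 u0 y x t = Fm x t := by
    intro x y hx hmin
    obtain ⟨⟨z, hz, hzv⟩, hlb⟩ := hFm x t hx ht.le
    exact le_antisymm (hzv ▸ hmin.2 z hz) (hlb y hmin.1)
  have hGval : ∀ x τ : ℝ, 0 ≤ x → MinimizesOn (fun τ => Gpot ρb ub τ x t) τ →
      Gpot ρb ub τ x t = Gm x t := by
    intro x τ hx hmin
    obtain ⟨⟨z, hz, hzv⟩, hlb⟩ := hGm x t hx ht.le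
    exact le_antisymm (hzv ▸ hmin.2 z hz) (hlb τ hmin.1)
  -- every minimizer τ of G at x > 0 satisfies τ < t
  have hτlt : ∀ x τ : ℝ, 0 < x → MinimizesOn (fun τ => Gpot ρb ub τ x t) τ → τ < t := by
    intro x τ hx hmin
    by_contra hτt
    push_neg at hτt
    set Mb' := max Mb 1 with hMb'def
    have hMb'pos : (0:ℝ) < Mb' := lt_of_lt_of_le one_pos (le_max_right _ _)
    set ε := min t (x / (2 * Mb')) with hεdef
    have hεpos : 0 < ε := lt_min ht (by positivity)
    have hεt : ε ≤ t := min_le_left _ _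
    have hεx : ε * (2 * Mb') ≤ x := by
      have h := min_le_right t (x / (2 * Mb'))
      calc ε * (2 * Mb') ≤ x / (2 * Mb') * (2 * Mb') :=
            mul_le_mul_of_nonneg_right h (by positivity)
        _ = x := by field_simp
    set τ' := t - ε with hτ'def
    have hτ'0 : 0 ≤ τ' := by simp only [hτ'def]; linarith
    have hτ'τ : τ' < τ := by simp only [hτ'def]; linarith
    have hsplit := intervalIntegral.integral_add_adjacent_intervals
      (hGint x 0 τ' le_rfl hτ'0) (hGint x τ' τ hτ'0 hτ'τ.le)
    have hposint : 0 < ∫ η in τ'..τ, (x - ub η * (t - η)) * (ρb η * ub η) := by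
      refine intervalIntegral.intervalIntegral_pos_of_pos_on (hGint x τ' τ hτ'0 hτ'τ.le)
        (fun η hη => ?_) hτ'τ
      have h0η : (0:ℝ) ≤ η := hτ'0.trans hη.1.le
      have hρub : 0 < ρb η * ub η := mul_pos (hρbpos η h0η) (hubpos η h0η)
      refine mul_pos ?_ hρub
      rcases le_or_gt t η with hcase | hcase
      · have hnp : ub η * (t - η) ≤ 0 :=
          mul_nonpos_of_nonneg_of_nonpos (hubpos η h0η).le (by linarith)
        linarith
      · have hub : ub η ≤ Mb' := ((le_abs_self _).trans (hMb η h0η)).trans (le_max_left _ _)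
        have htη : 0 < t - η := by linarith
        have h1 : t - η < ε := by
          have := hη.1
          simp only [hτ'def] at this
          linarith
        have h2 : ub η * (t - η) ≤ Mb' * (t - η) :=
          mul_le_mul_of_nonneg_right hub htη.le
        have h3 : Mb' * (t - η) < Mb' * ε := mul_lt_mul_of_pos_left h1 hMb'pos
        nlinarith
    have hle : Gpot ρb ub τ x t ≤ Gpot ρb ub τ' x t := hmin.2 τ' hτ'0
    have hsum : Gpot ρb ub τ x t = Gpot ρb ub τ' x t
        + ∫ η in τ'..τ, (x - ub η * (t - η)) * (ρb η * ub η) := by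
      rw [Gpot, Gpot, ← hsplit]
    linarith
  -- the main one-sided statement
  have main : ∀ a b : ℝ, 0 < a → 0 < b → a < b →
      ∀ p : ℝ × ℝ, p ∈ charTriangle Fm Gm ys yS τs τS a t ∩ charTriangle Fm Gm ys yS τs τS b t →
        p.1 = 0 ∨ p.2 = 0 := by
    intro a b ha hb hab p hp
    obtain ⟨hp1, hp2⟩ := hp
    have hmys_a := hys a t ha.le ht.le
    have hmyS_a := hyS a t ha.le ht.le
    have hmys_b := hys b t hb.le ht.le
    have hmyS_b := hyS b t hb.le ht.le
    have hmτs_a := hτs a t ha.le ht.le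
    have hmτS_a := hτS a t ha.le ht.le
    have hmτs_b := hτs b t hb.le ht.le
    have hmτS_b := hτS b t hb.le ht.le
    have h0ysa : 0 ≤ ys a t := hmys_a.1.1
    have h0ySa : 0 ≤ yS a t := hmyS_a.1.1
    have h0ysb : 0 ≤ ys b t := hmys_b.1.1
    have h0ySb : 0 ≤ yS b t := hmyS_b.1.1
    have h0τsa : 0 ≤ τs a t := hmτs_a.1.1
    have h0τSa : 0 ≤ τS a t := hmτS_a.1.1
    have h0τsb : 0 ≤ τs b t := hmτs_b.1.1
    have h0τSb : 0 ≤ τS b t := hmτS_b.1.1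
    have hysSa : ys a t ≤ yS a t := hmyS_a.2 _ hmys_a.1
    have hysSb : ys b t ≤ yS b t := hmyS_b.2 _ hmys_b.1
    have hτsSa : τs a t ≤ τS a t := hmτS_a.2 _ hmτs_a.1
    have hτsSb : τs b t ≤ τS b t := hmτS_b.2 _ hmτs_b.1
    have hτSat : τS a t < t := hτlt a _ ha hmτS_a.1
    have hτSbt : τS b t < t := hτlt b _ hb hmτS_b.1
    have hτsat : τs a t < t := lt_of_le_of_lt hτsSa hτSat
    -- monotonicity of minimizers
    have hyab : yS a t ≤ ys b t := by
      by_contra hcon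
      push_neg at hcon
      have h1 : Fpot ρ0 u0 (yS a t) a t ≤ Fpot ρ0 u0 (ys b t) a t := hmyS_a.1.2 _ h0ysb
      have h2 : Fpot ρ0 u0 (ys b t) b t ≤ Fpot ρ0 u0 (yS a t) b t := hmys_b.1.2 _ h0ySa
      rw [hFlin a b _ h0ysb, hFlin a b _ h0ySa] at h2
      have hB := hBmono (ys b t) (yS a t) h0ysb hcon
      nlinarith [mul_pos (sub_pos.2 hab) (sub_pos.2 hB)]
    have hτba : τS b t ≤ τs a t := by
      by_contra hcon
      push_neg at hcon
      have h1 : Gpot ρb ub (τs a t) a t ≤ Gpot ρb ub (τS b t) a t := hmτs_a.1.2 _ h0τSb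
      have h2 : Gpot ρb ub (τS b t) b t ≤ Gpot ρb ub (τs a t) b t := hmτS_b.1.2 _ h0τsa
      rw [hGlin a b _ h0τSb, hGlin a b _ h0τsa] at h2
      have hC := hCmono (τs a t) (τS b t) h0τsa hcon
      nlinarith [mul_pos (sub_pos.2 hab) (sub_pos.2 hC)]
    -- monotonicity of the minimal values
    have hFmono : Fm b t ≤ Fm a t := by
      have h1 : Fpot ρ0 u0 (yS a t) a t = Fm a t := hFval a _ ha.le hmyS_a.1
      have h2 : Fm b t ≤ Fpot ρ0 u0 (yS a t) b t := (hFm b t hb.le ht.le).2 _ h0ySa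
      rw [hFlin a b _ h0ySa] at h2
      nlinarith [mul_nonneg (sub_pos.2 hab).le (hBnonneg _ h0ySa)]
    have hGmono : Gm a t ≤ Gm b t := by
      have h1 : Gpot ρb ub (τS b t) b t = Gm b t := hGval b _ hb.le hmτS_b.1
      have h2 : Gm a t ≤ Gpot ρb ub (τS b t) a t := (hGm a t ha.le ht.le).2 _ h0τSb
      have h3 := hGlin a b (τS b t) h0τSb
      nlinarith [mul_nonneg (sub_pos.2 hab).le (hCnonneg _ h0τSb)]
    -- unfold the triangles
    simp only [charTriangle] at hp1 hp2
    rw [if_neg (fun h => ha.ne' h.1)] at hp1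
    rw [if_neg (fun h => hb.ne' h.1)] at hp2
    -- nonnegativity of p
    have h0p : 0 ≤ p.1 ∧ 0 ≤ p.2 := by
      have hp1' := hp1
      split_ifs at hp1' with h1 h2
      · exact hull3_nonneg ⟨ha.le, ht.le⟩ ⟨h0ysa, le_rfl⟩ ⟨h0ySa, le_rfl⟩ hp1'
      · exact hull3_nonneg ⟨ha.le, ht.le⟩ ⟨le_rfl, h0τsa⟩ ⟨le_rfl, h0τSa⟩ hp1'
      · exact hull4_nonneg ⟨ha.le, ht.le⟩ ⟨h0ySa, le_rfl⟩ ⟨le_rfl, h0τSa⟩ ⟨le_rfl, le_rfl⟩ hp1'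
    obtain ⟨h0p1, h0p2⟩ := h0p
    rcases eq_or_lt_of_le h0p1 with hq1 | hq1
    · exact Or.inl hq1.symm
    rcases eq_or_lt_of_le h0p2 with hq2 | hq2
    · exact Or.inr hq2.symm
    exfalso
    rcases lt_trichotomy (Fm b t) (Gm b t) with hB | hB | hB
    · -- triangle at b has its base on the x-axis
      rw [if_pos hB] at hp2
      have e2 : -t * p.1 + (b - ys b t) * p.2 ≤ -t * ys b t :=
        hull3_le (by show -t * b + (b - ys b t) * t ≤ -t * ys b t; exact le_of_eq (by ring))
          (by show -t * ys b t + (b - ys b t) * 0 ≤ -t * ys b t; exact le_of_eq (by ring))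
          (by show -t * yS b t + (b - ys b t) * 0 ≤ -t * ys b t
              nlinarith [mul_le_mul_of_nonneg_left hysSb ht.le]) hp2
      have e3 : 0 * p.1 + 1 * p.2 ≤ t :=
        hull3_le (by show (0:ℝ) * b + 1 * t ≤ t; linarith)
          (by show (0:ℝ) * ys b t + 1 * 0 ≤ t; linarith)
          (by show (0:ℝ) * yS b t + 1 * 0 ≤ t; linarith) hp2
      rcases lt_trichotomy (Fm a t) (Gm a t) with hA | hA | hA
      · rw [if_pos hA] at hp1
        have e1 : t * p.1 + (yS a t - a) * p.2 ≤ t * yS a t :=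
          hull3_le (by show t * a + (yS a t - a) * t ≤ t * yS a t; exact le_of_eq (by ring))
            (by show t * ys a t + (yS a t - a) * 0 ≤ t * yS a t
                nlinarith [mul_le_mul_of_nonneg_left hysSa ht.le])
            (by show t * yS a t + (yS a t - a) * 0 ≤ t * yS a t; exact le_of_eq (by ring)) hp1
        nlinarith [mul_nonneg (sub_nonneg.2 hyab) (by linarith : (0:ℝ) ≤ t - p.2),
          mul_pos (sub_pos.2 hab) hq2]
      · rw [if_neg (by simp [hA]), if_neg (by simp [hA])] at hp1
        have e1 : t * p.1 + (yS a t - a) * p.2 ≤ t * yS a t :=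
          hull4_le (by show t * a + (yS a t - a) * t ≤ t * yS a t; exact le_of_eq (by ring))
            (by show t * yS a t + (yS a t - a) * 0 ≤ t * yS a t; exact le_of_eq (by ring))
            (by show t * 0 + (yS a t - a) * τS a t ≤ t * yS a t
                nlinarith [mul_nonneg h0ySa (by linarith : (0:ℝ) ≤ t - τS a t),
                  mul_nonneg ha.le h0τSa])
            (by show t * 0 + (yS a t - a) * 0 ≤ t * yS a t
                nlinarith [mul_nonneg ht.le h0ySa]) hp1
        nlinarith [mul_nonneg (sub_nonneg.2 hyab) (by linarith : (0:ℝ) ≤ t - p.2),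
          mul_pos (sub_pos.2 hab) hq2]
      · rw [if_neg (asymm hA), if_pos hA] at hp1
        have e1 : (t - τs a t) * p.1 + (-a) * p.2 ≤ -(τs a t) * a :=
          hull3_le
            (by show (t - τs a t) * a + (-a) * t ≤ -(τs a t) * a; exact le_of_eq (by ring))
            (by show (t - τs a t) * 0 + (-a) * τs a t ≤ -(τs a t) * a; exact le_of_eq (by ring))
            (by show (t - τs a t) * 0 + (-a) * τS a t ≤ -(τs a t) * a
                nlinarith [mul_le_mul_of_nonneg_left hτsSa ha.le]) hp1
        have e2' : 1 * p.1 + 0 * p.2 ≤ a :=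
          hull3_le (by show (1:ℝ) * a + 0 * t ≤ a; linarith)
            (by show (1:ℝ) * 0 + 0 * τs a t ≤ a; linarith)
            (by show (1:ℝ) * 0 + 0 * τS a t ≤ a; linarith) hp1
        have e3' : -t * p.1 + b * p.2 ≤ 0 * b :=
          hull3_le (by show -t * b + b * t ≤ 0 * b; exact le_of_eq (by ring))
            (by show -t * ys b t + b * 0 ≤ 0 * b; nlinarith [mul_nonneg ht.le h0ysb])
            (by show -t * yS b t + b * 0 ≤ 0 * b; nlinarith [mul_nonneg ht.le h0ySb]) hp2
        nlinarith [mul_le_mul_of_nonneg_left e1 hb.le, mul_le_mul_of_nonneg_left e3' ha.le,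
          mul_pos (mul_pos hq1 (sub_pos.2 hab)) (sub_pos.2 hτsat),
          mul_nonneg (mul_nonneg ha.le h0τsa) (by linarith : (0:ℝ) ≤ b - p.1),
          mul_nonneg (mul_nonneg ha.le hq1.le) h0τsa]
    · -- Fm b t = Gm b t : the tie case at b
      rw [if_neg (by simp [hB]), if_neg (by simp [hB])] at hp2
      rcases lt_trichotomy (Fm a t) (Gm a t) with hA | hA | hA
      · linarith
      · -- tie at a and at b : degenerate situation
        have hyA0 : yS a t = 0 := by
          by_contra hcon
          have hpos : 0 < yS a t := lt_of_le_of_ne h0ySa (Ne.symm hcon)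
          have h1 : Fpot ρ0 u0 (yS a t) a t = Fm a t := hFval a _ ha.le hmyS_a.1
          have h2 : Fm b t ≤ Fpot ρ0 u0 (yS a t) b t := (hFm b t hb.le ht.le).2 _ h0ySa
          rw [hFlin a b _ h0ySa] at h2
          have hBp : 0 < ∫ η in (0:ℝ)..(yS a t), ρ0 η := hBpos 0 _ le_rfl hpos
          nlinarith [mul_pos (sub_pos.2 hab) hBp]
        have hτB0 : τS b t = 0 := by
          by_contra hcon
          have hpos : 0 < τS b t := lt_of_le_of_ne h0τSb (Ne.symm hcon)
          have h1 : Gpot ρb ub (τS b t) b t = Gm b t := hGval b _ hb.le hmτS_b.1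
          have h2 : Gm a t ≤ Gpot ρb ub (τS b t) a t := (hGm a t ha.le ht.le).2 _ h0τSb
          have h3 := hGlin a b _ h0τSb
          have hCp : 0 < ∫ η in (0:ℝ)..(τS b t), ρb η * ub η := hCpos 0 _ le_rfl hpos
          nlinarith [mul_pos (sub_pos.2 hab) hCp]
        rw [if_neg (by simp [hA]), if_neg (by simp [hA])] at hp1
        have e1 : t * p.1 + (-a) * p.2 ≤ 0 :=
          hull4_le (by show t * a + (-a) * t ≤ 0; exact le_of_eq (by ring))
            (by show t * yS a t + (-a) * 0 ≤ 0; rw [hyA0]; norm_num)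
            (by show t * 0 + (-a) * τS a t ≤ 0; nlinarith [mul_nonneg ha.le h0τSa])
            (by show t * 0 + (-a) * 0 ≤ 0; norm_num) hp1
        have e2 : -t * p.1 + b * p.2 ≤ 0 :=
          hull4_le (by show -t * b + b * t ≤ 0; exact le_of_eq (by ring))
            (by show -t * yS b t + b * 0 ≤ 0; nlinarith [mul_nonneg ht.le h0ySb])
            (by show -t * 0 + b * τS b t ≤ 0; rw [hτB0]; norm_num)
            (by show -t * 0 + b * 0 ≤ 0; norm_num) hp2
        nlinarith [mul_pos (sub_pos.2 hab) hq2]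
      · -- base on t-axis at a, tie at b
        rw [if_neg (asymm hA), if_pos hA] at hp1
        have e1 : (t - τs a t) * p.1 + (-a) * p.2 ≤ -(τs a t) * a :=
          hull3_le
            (by show (t - τs a t) * a + (-a) * t ≤ -(τs a t) * a; exact le_of_eq (by ring))
            (by show (t - τs a t) * 0 + (-a) * τs a t ≤ -(τs a t) * a; exact le_of_eq (by ring))
            (by show (t - τs a t) * 0 + (-a) * τS a t ≤ -(τs a t) * a
                nlinarith [mul_le_mul_of_nonneg_left hτsSa ha.le]) hp1
        have e2' : 1 * p.1 + 0 * p.2 ≤ a :=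
          hull3_le (by show (1:ℝ) * a + 0 * t ≤ a; linarith)
            (by show (1:ℝ) * 0 + 0 * τs a t ≤ a; linarith)
            (by show (1:ℝ) * 0 + 0 * τS a t ≤ a; linarith) hp1
        have e3' : -(t - τS b t) * p.1 + b * p.2 ≤ τS b t * b :=
          hull4_le
            (by show -(t - τS b t) * b + b * t ≤ τS b t * b; exact le_of_eq (by ring))
            (by show -(t - τS b t) * yS b t + b * 0 ≤ τS b t * b
                nlinarith [mul_nonneg (by linarith : (0:ℝ) ≤ t - τS b t) h0ySb,
                  mul_nonneg h0τSb hb.le])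
            (by show -(t - τS b t) * 0 + b * τS b t ≤ τS b t * b; exact le_of_eq (by ring))
            (by show -(t - τS b t) * 0 + b * 0 ≤ τS b t * b
                nlinarith [mul_nonneg h0τSb hb.le]) hp2
        nlinarith [mul_le_mul_of_nonneg_left e1 hb.le, mul_le_mul_of_nonneg_left e3' ha.le,
          mul_pos (mul_pos hq1 (sub_pos.2 hab)) (sub_pos.2 hτsat),
          mul_nonneg (mul_nonneg ha.le (sub_nonneg.2 hτba)) (by linarith : (0:ℝ) ≤ b - p.1),
          mul_nonneg (mul_nonneg ha.le hq1.le) (sub_nonneg.2 hτba)]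
    · -- base on the t-axis at b
      rw [if_neg (asymm hB), if_pos hB] at hp2
      rcases lt_trichotomy (Fm a t) (Gm a t) with hA | hA | hA
      · linarith
      · linarith
      · -- both bases on the t-axis
        rw [if_neg (asymm hA), if_pos hA] at hp1
        have e1 : (t - τs a t) * p.1 + (-a) * p.2 ≤ -(τs a t) * a :=
          hull3_le
            (by show (t - τs a t) * a + (-a) * t ≤ -(τs a t) * a; exact le_of_eq (by ring))
            (by show (t - τs a t) * 0 + (-a) * τs a t ≤ -(τs a t) * a; exact le_of_eq (by ring))
            (by show (t - τs a t) * 0 + (-a) * τS a t ≤ -(τs a t) * a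
                nlinarith [mul_le_mul_of_nonneg_left hτsSa ha.le]) hp1
        have e2' : 1 * p.1 + 0 * p.2 ≤ a :=
          hull3_le (by show (1:ℝ) * a + 0 * t ≤ a; linarith)
            (by show (1:ℝ) * 0 + 0 * τs a t ≤ a; linarith)
            (by show (1:ℝ) * 0 + 0 * τS a t ≤ a; linarith) hp1
        have e3' : -(t - τS b t) * p.1 + b * p.2 ≤ τS b t * b :=
          hull3_le
            (by show -(t - τS b t) * b + b * t ≤ τS b t * b; exact le_of_eq (by ring))
            (by show -(t - τS b t) * 0 + b * τs b t ≤ τS b t * b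
                nlinarith [mul_le_mul_of_nonneg_left hτsSb hb.le])
            (by show -(t - τS b t) * 0 + b * τS b t ≤ τS b t * b; exact le_of_eq (by ring)) hp2
        nlinarith [mul_le_mul_of_nonneg_left e1 hb.le, mul_le_mul_of_nonneg_left e3' ha.le,
          mul_pos (mul_pos hq1 (sub_pos.2 hab)) (sub_pos.2 hτsat),
          mul_nonneg (mul_nonneg ha.le (sub_nonneg.2 hτba)) (by linarith : (0:ℝ) ≤ b - p.1),
          mul_nonneg (mul_nonneg ha.le hq1.le) (sub_nonneg.2 hτba)]
  rcases lt_or_gt_of_ne hne with h | h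
  · exact main x₁ x₂ hx₁ hx₂ h
  · exact fun p hp => main x₂ x₁ hx₂ hx₁ h p ⟨hp.2, hp.1⟩
end
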